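/- arXiv:1308.5349 — 3 statements merged into one kernel-verified Lean document; each statement's English description precedes it below -/
import Mathlib

section
/- For any two locally integrable functions f and g on the real line and any dyadic interval I, the Haar coefficient of the product satisfies: ⟨fg, h_I⟩ = Σ_{J ⊊ I} ⟨f,h_J⟩⟨g,h_J⟩ δ(J,I)/√|I| + ⟨f,h_I⟩·(avg of g over I) + ⟨g,h_I⟩·(avg of f over I), where δ(J,I)=1 if J ⊆ I₋ (left half of I) and δ(J,I)=-1 if J ⊆ I₊ (right half of I), and h_I = |I|^{-1/2}(1_{I₋} - 1_{I₊}) is the L²-normalized Haar function. -/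
open MeasureTheory Set
open scoped ENNReal

noncomputable section

/-- The dyadic interval `[k·2^n, (k+1)·2^n)` encoded by the pair `p = (n, k)`. -/
def dyad (p : ℤ × ℤ) : Set ℝ := Set.Ico ((p.2 : ℝ) * 2 ^ p.1) (((p.2 : ℝ) + 1) * 2 ^ p.1)

/-- Left half of a dyadic interval. -/
def dLeft (p : ℤ × ℤ) : ℤ × ℤ := (p.1 - 1, 2 * p.2)

/-- Right half of a dyadic interval. -/
def dRight (p : ℤ × ℤ) : ℤ × ℤ := (p.1 - 1, 2 * p.2 + 1)

/-- Dyadic parent. -/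
def dParent (p : ℤ × ℤ) : ℤ × ℤ := (p.1 + 1, Int.fdiv p.2 2)

/-- Length of the dyadic interval. -/
def dLen (p : ℤ × ℤ) : ℝ := 2 ^ p.1

/-- The L²-normalized Haar function `h_I = |I|^{-1/2}(1_{I₋} - 1_{I₊})`. -/
def haarF (p : ℤ × ℤ) : ℝ → ℝ := fun x =>
  (Real.sqrt (dLen p))⁻¹ *
    ((dyad (dLeft p)).indicator (fun _ => (1 : ℝ)) x -
      (dyad (dRight p)).indicator (fun _ => (1 : ℝ)) x)

/-- The averaging function `h_I^1 = |I|^{-1} 1_I`. -/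
def haarAvg (p : ℤ × ℤ) : ℝ → ℝ := fun x =>
  (dLen p)⁻¹ * (dyad p).indicator (fun _ => (1 : ℝ)) x

/-- Haar coefficient `⟨f, h_I⟩`. -/
def hc (f : ℝ → ℝ) (p : ℤ × ℤ) : ℝ := ∫ x, f x * haarF p x

/-- Average `⟨f⟩_I = |I|⁻¹ ∫_I f`. -/
def avg (f : ℝ → ℝ) (p : ℤ × ℤ) : ℝ := (dLen p)⁻¹ * ∫ x in dyad p, f x

open Classical in
/-- `δ(J, I) = 1` if `J ⊆ I₋` and `-1` otherwise (in particular if `J ⊆ I₊`). -/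
def dsgn (q p : ℤ × ℤ) : ℝ := if dyad q ⊆ dyad (dLeft p) then 1 else -1

/-- `𝔰(J) = √2 · Σ_{K : K₋ ⊋ J} |K|⁻¹`. -/
def sfrak (p : ℤ × ℤ) : ℝ :=
  Real.sqrt 2 * ∑' q : {q : ℤ × ℤ // dyad p ⊂ dyad (dLeft q)}, (dLen q.1)⁻¹

namespace HaarAux

lemma dLen_pos (p : ℤ × ℤ) : 0 < dLen p := zpow_pos two_pos _

lemma dLen_left (p : ℤ × ℤ) : dLen (dLeft p) = dLen p / 2 := by
  simp only [dLen, dLeft]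
  rw [zpow_sub_one₀ (two_ne_zero)]
  ring

lemma dLen_right (p : ℤ × ℤ) : dLen (dRight p) = dLen p / 2 := by
  simp only [dLen, dRight]
  rw [zpow_sub_one₀ (two_ne_zero)]
  ring

/-- left endpoint -/
def lo (p : ℤ × ℤ) : ℝ := (p.2 : ℝ) * 2 ^ p.1

lemma dyad_eq (p : ℤ × ℤ) : dyad p = Set.Ico (lo p) (lo p + dLen p) := by
  simp only [dyad, lo, dLen]; ring_nf

lemma two_zpow_sub_one (n : ℤ) : (2:ℝ) ^ (n - 1) * 2 = 2 ^ n := by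
  rw [zpow_sub_one₀ (two_ne_zero : (2:ℝ) ≠ 0)]; ring

lemma lo_dLeft (p : ℤ × ℤ) : lo (dLeft p) = lo p := by
  simp only [lo, dLeft]
  push_cast
  rw [mul_comm (2:ℝ) (p.2:ℝ), mul_assoc, mul_comm (2:ℝ) ((2:ℝ)^(p.1-1)), two_zpow_sub_one]

lemma lo_dRight (p : ℤ × ℤ) : lo (dRight p) = lo p + dLen p / 2 := by
  simp only [lo, dRight, dLen]
  push_cast
  have h := two_zpow_sub_one p.1
  linear_combination ((p.2:ℝ) + 1/2) * h

lemma mid_eq (p : ℤ × ℤ) : lo (dLeft p) + dLen (dLeft p) = lo (dRight p) := by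
  rw [lo_dLeft, lo_dRight, dLen_left]

lemma hi_dRight (p : ℤ × ℤ) : lo (dRight p) + dLen (dRight p) = lo p + dLen p := by
  rw [lo_dRight, dLen_right]; ring

lemma dyad_union (p : ℤ × ℤ) : dyad (dLeft p) ∪ dyad (dRight p) = dyad p := by
  rw [dyad_eq, dyad_eq, dyad_eq, mid_eq, hi_dRight, lo_dLeft]
  refine Set.Ico_union_Ico_eq_Ico ?_ ?_
  · linarith [dLen_pos (dLeft p), lo_dLeft p, mid_eq p]
  · linarith [dLen_pos (dRight p), lo_dRight p, dLen_right p, dLen_pos p, hi_dRight p]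

lemma dyad_disjoint (p : ℤ × ℤ) : Disjoint (dyad (dLeft p)) (dyad (dRight p)) := by
  rw [dyad_eq, dyad_eq, mid_eq]
  exact Set.Ico_disjoint_Ico_same

lemma lo_mem (p : ℤ × ℤ) : lo p ∈ dyad p := by
  rw [dyad_eq]; exact ⟨le_refl _, by linarith [dLen_pos p]⟩

lemma measurableSet_dyad (p : ℤ × ℤ) : MeasurableSet (dyad p) := measurableSet_Ico

lemma volume_dyad (p : ℤ × ℤ) : volume (dyad p) = ENNReal.ofReal (dLen p) := by
  rw [dyad_eq, Real.volume_Ico]; congr 1; ring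

/-- key multiple lemma: if `a * 2^s < b * 2^t` with `s ≤ t` then `(a+1) * 2^s ≤ b * 2^t`. -/
lemma step_le {a b s t : ℤ} (hst : s ≤ t) (h : (a:ℝ) * 2 ^ s < (b:ℝ) * 2 ^ t) :
    ((a:ℝ) + 1) * 2 ^ s ≤ (b:ℝ) * 2 ^ t := by
  have h2s : (0:ℝ) < 2 ^ s := zpow_pos two_pos _
  have hbt : (b:ℝ) * 2 ^ t = ((b * 2 ^ (t - s).toNat : ℤ) : ℝ) * 2 ^ s := by
    push_cast
    rw [mul_assoc]
    congr 1
    rw [← zpow_natCast (2:ℝ) (t-s).toNat, Int.toNat_of_nonneg (by omega), ← zpow_add₀ (two_ne_zero : (2:ℝ) ≠ 0)]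
    congr 1; omega
  rw [hbt] at h ⊢
  have : a < b * 2 ^ (t - s).toNat := by
    exact_mod_cast (mul_lt_mul_iff_of_pos_right h2s).1 h
  have : (a:ℝ) + 1 ≤ ((b * 2 ^ (t - s).toNat : ℤ) : ℝ) := by exact_mod_cast this
  nlinarith

/-- reverse step: if `b * 2^t < (a+1) * 2^s` with `s ≤ t` then `b * 2^t ≤ a * 2^s`. -/
lemma step_le' {a b s t : ℤ} (hst : s ≤ t) (h : ((b:ℝ)) * 2 ^ t < ((a:ℝ)) * 2 ^ s) :
    (b:ℝ) * 2 ^ t ≤ ((a:ℝ) - 1) * 2 ^ s := by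
  have h2s : (0:ℝ) < 2 ^ s := zpow_pos two_pos _
  have hbt : (b:ℝ) * 2 ^ t = ((b * 2 ^ (t - s).toNat : ℤ) : ℝ) * 2 ^ s := by
    push_cast
    rw [mul_assoc]
    congr 1
    rw [← zpow_natCast (2:ℝ) (t-s).toNat, Int.toNat_of_nonneg (by omega), ← zpow_add₀ (two_ne_zero : (2:ℝ) ≠ 0)]
    congr 1; omega
  rw [hbt] at h ⊢
  have : b * 2 ^ (t - s).toNat < a := by
    exact_mod_cast (mul_lt_mul_iff_of_pos_right h2s).1 h
  have : ((b * 2 ^ (t - s).toNat : ℤ) : ℝ) ≤ (a:ℝ) - 1 := by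
    have : b * 2 ^ (t - s).toNat ≤ a - 1 := by omega
    exact_mod_cast this
  nlinarith

/-- nesting: intersecting dyadic intervals with comparable scale are nested -/
lemma dyad_subset_of_mem {q p : ℤ × ℤ} (hst : q.1 ≤ p.1) {x : ℝ}
    (hq : x ∈ dyad q) (hp : x ∈ dyad p) : dyad q ⊆ dyad p := by
  rw [dyad_eq] at *
  obtain ⟨hq1, hq2⟩ := hq
  obtain ⟨hp1, hp2⟩ := hp
  have h1 : lo p ≤ lo q := by
    by_contra hcon
    push_neg at hcon
    have := step_le hst (by simpa [lo, dLen] using hcon : (q.2:ℝ) * 2 ^ q.1 < (p.2:ℝ) * 2 ^ p.1)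
    have : lo q + dLen q ≤ lo p := by
      simpa [lo, dLen, add_mul] using this
    linarith
  have h2 : lo q + dLen q ≤ lo p + dLen p := by
    by_contra hcon
    push_neg at hcon
    have hcon' : ((p.2 + 1 : ℤ):ℝ) * 2 ^ p.1 < ((q.2 + 1 : ℤ):ℝ) * 2 ^ q.1 := by
      push_cast
      simp only [lo, dLen] at hcon
      linarith
    have := step_le' hst hcon'
    have hle : lo p + dLen p ≤ lo q := by
      simp only [lo, dLen]
      push_cast at this
      linarith
    linarith
  rw [dyad_eq p]
  exact Set.Ico_subset_Ico h1 h2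

lemma endpoints_of_subset {q p : ℤ × ℤ} (h : dyad q ⊆ dyad p) :
    lo p ≤ lo q ∧ lo q + dLen q ≤ lo p + dLen p := by
  rw [dyad_eq, dyad_eq] at h
  exact (Set.Ico_subset_Ico_iff (by linarith [dLen_pos q])).1 h

lemma scale_le_of_subset {q p : ℤ × ℤ} (h : dyad q ⊆ dyad p) : q.1 ≤ p.1 := by
  obtain ⟨h1, h2⟩ := endpoints_of_subset h
  have : dLen q ≤ dLen p := by linarith
  exact (zpow_le_zpow_iff_right₀ (one_lt_two : (1:ℝ) < 2)).1 this

lemma eq_of_subset_of_scale_le {q p : ℤ × ℤ} (h : dyad q ⊆ dyad p) (h2 : p.1 ≤ q.1) : q = p := by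
  have hs : q.1 = p.1 := le_antisymm (scale_le_of_subset h) h2
  obtain ⟨ha, hb⟩ := endpoints_of_subset h
  have hlen : dLen q = dLen p := by simp [dLen, hs]
  have hlo : lo q = lo p := by
    have : lo q ≤ lo p := by linarith
    linarith
  have h2q : (0:ℝ) < 2 ^ p.1 := zpow_pos two_pos _
  have : (q.2 : ℝ) = p.2 := by
    have := hlo
    simp only [lo, hs] at this
    exact mul_right_cancel₀ (ne_of_gt h2q) this
  have : q.2 = p.2 := by exact_mod_cast this
  exact Prod.ext hs this

lemma dyad_ssubset_iff {q p : ℤ × ℤ} :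
    dyad q ⊂ dyad p ↔ dyad q ⊆ dyad (dLeft p) ∨ dyad q ⊆ dyad (dRight p) := by
  constructor
  · intro h
    have hlt : q.1 < p.1 := by
      rcases lt_or_ge q.1 p.1 with h' | h'
      · exact h'
      · exfalso
        have hq := eq_of_subset_of_scale_le h.subset h'
        rw [hq] at h
        exact lt_irrefl _ h
    have hmem : lo q ∈ dyad p := h.subset (lo_mem q)
    rw [← dyad_union p] at hmem
    rcases hmem with hmem | hmem
    · exact Or.inl (dyad_subset_of_mem (by simp [dLeft]; omega) (lo_mem q) hmem)
    · exact Or.inr (dyad_subset_of_mem (by simp [dRight]; omega) (lo_mem q) hmem)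
  · rintro (h | h)
    · refine ⟨h.trans (by rw [← dyad_union p]; exact Set.subset_union_left), fun hsup => ?_⟩
      have hmemR : lo (dRight p) ∈ dyad q := hsup (by rw [← dyad_union p]; exact Or.inr (lo_mem _))
      exact Set.disjoint_left.mp (dyad_disjoint p) (h hmemR) (lo_mem _)
    · refine ⟨h.trans (by rw [← dyad_union p]; exact Set.subset_union_right), fun hsup => ?_⟩
      have hmemL : lo (dLeft p) ∈ dyad q := hsup (by rw [← dyad_union p]; exact Or.inl (lo_mem _))
      exact Set.disjoint_left.mp (dyad_disjoint p) (lo_mem _) (h hmemL)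

lemma not_subset_both {q p : ℤ × ℤ} (hL : dyad q ⊆ dyad (dLeft p)) (hR : dyad q ⊆ dyad (dRight p)) : False :=
  Set.disjoint_left.mp (dyad_disjoint p) (hL (lo_mem q)) (hR (lo_mem q))

/-- depth-`m` dyadic descendants -/
def desc : ℕ → ℤ × ℤ → Finset (ℤ × ℤ)
  | 0, p => {p}
  | (m+1), p => (desc m p).biUnion (fun q => {dLeft q, dRight q})

lemma mem_desc_scale {q p : ℤ × ℤ} : ∀ {m : ℕ}, q ∈ desc m p → q.1 = p.1 - m := by
  intro m
  induction m generalizing q with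
  | zero => intro h; simp only [desc, Finset.mem_singleton] at h; simp [h]
  | succ m ih =>
    intro h
    simp only [desc, Finset.mem_biUnion] at h
    obtain ⟨r, hr, hq⟩ := h
    have := ih hr
    simp only [Finset.mem_insert, Finset.mem_singleton] at hq
    rcases hq with rfl | rfl <;> simp [dLeft, dRight, this] <;> omega

lemma mem_desc_subset {q p : ℤ × ℤ} : ∀ {m : ℕ}, q ∈ desc m p → dyad q ⊆ dyad p := by
  intro m
  induction m generalizing q with
  | zero => intro h; simp only [desc, Finset.mem_singleton] at h; simp [h]
  | succ m ih =>
    intro h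
    simp only [desc, Finset.mem_biUnion] at h
    obtain ⟨r, hr, hq⟩ := h
    have hsub : dyad q ⊆ dyad r := by
      simp only [Finset.mem_insert, Finset.mem_singleton] at hq
      rcases hq with rfl | rfl
      · rw [← dyad_union r]; exact Set.subset_union_left
      · rw [← dyad_union r]; exact Set.subset_union_right
    exact hsub.trans (ih hr)

lemma dLeft_ne_dRight (q : ℤ × ℤ) : dLeft q ≠ dRight q := by
  simp only [dLeft, dRight, Prod.mk.injEq, ne_eq]
  omega

lemma desc_sum_succ {M : Type*} [AddCommMonoid M] (F : ℤ × ℤ → M) (m : ℕ) (p : ℤ × ℤ) :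
    ∑ q ∈ desc (m+1) p, F q = ∑ r ∈ desc m p, (F (dLeft r) + F (dRight r)) := by
  show ∑ q ∈ (desc m p).biUnion _, F q = _
  rw [Finset.sum_biUnion]
  · refine Finset.sum_congr rfl fun r _ => ?_
    rw [Finset.sum_pair (dLeft_ne_dRight r)]
  · intro r hr r' hr' hne
    have h1 := mem_desc_scale hr
    have h2 := mem_desc_scale hr'
    have hk : r.2 ≠ r'.2 := by
      intro hk
      exact hne (Prod.ext (h1.trans h2.symm) hk)
    simp only [Finset.disjoint_left, Finset.mem_insert, Finset.mem_singleton]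
    rintro x (rfl | rfl) hx <;>
      · rcases hx with hx | hx <;>
        · simp only [dLeft, dRight, Prod.mk.injEq] at hx; omega
  -- membership of disjoint function needs coe

lemma desc_succ_eq_union (m : ℕ) (p : ℤ × ℤ) :
    desc (m+1) p = desc m (dLeft p) ∪ desc m (dRight p) := by
  induction m generalizing p with
  | zero => simp [desc, Finset.biUnion_singleton]
  | succ m ih =>
    show (desc (m+1) p).biUnion _ = _
    rw [ih p]
    ext x
    simp only [Finset.mem_biUnion, Finset.mem_union, desc]
    constructor
    · rintro ⟨r, hr | hr, hx⟩
      · exact Or.inl ⟨r, hr, hx⟩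
      · exact Or.inr ⟨r, hr, hx⟩
    · rintro (⟨r, hr, hx⟩ | ⟨r, hr, hx⟩)
      · exact ⟨r, Or.inl hr, hx⟩
      · exact ⟨r, Or.inr hr, hx⟩

lemma mem_desc_of_subset {q p : ℤ × ℤ} (m : ℕ) (hm : q.1 + m = p.1) (h : dyad q ⊆ dyad p) :
    q ∈ desc m p := by
  induction m generalizing p with
  | zero =>
    have : q = p := eq_of_subset_of_scale_le h (by omega)
    simp [desc, this]
  | succ m ih =>
    have hss : dyad q ⊂ dyad p := by
      refine ⟨h, fun hsub => ?_⟩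
      have := scale_le_of_subset hsub
      omega
    rw [desc_succ_eq_union, Finset.mem_union]
    rcases dyad_ssubset_iff.1 hss with h' | h'
    · exact Or.inl (ih (by simp [dLeft]; omega) h')
    · exact Or.inr (ih (by simp [dRight]; omega) h')

lemma sum_dLen (m : ℕ) (p : ℤ × ℤ) : ∑ q ∈ desc m p, dLen q = dLen p := by
  induction m generalizing p with
  | zero => simp [desc]
  | succ m ih =>
    rw [desc_sum_succ]
    calc ∑ r ∈ desc m p, (dLen (dLeft r) + dLen (dRight r))
        = ∑ r ∈ desc m p, dLen r := by
          refine Finset.sum_congr rfl fun r _ => ?_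
          rw [dLen_left, dLen_right]; ring
      _ = dLen p := ih p

lemma integrableOn_dyad {f : ℝ → ℝ} (hf : LocallyIntegrable f volume) (p : ℤ × ℤ) :
    IntegrableOn f (dyad p) volume := by
  have h1 : IntegrableOn f (Set.Icc (lo p) (lo p + dLen p)) volume :=
    hf.integrableOn_isCompact isCompact_Icc
  refine h1.mono_set ?_
  rw [dyad_eq]
  exact Set.Ico_subset_Icc_self

lemma memLp_locallyIntegrable {f : ℝ → ℝ} (hf : MemLp f 2 volume) :
    LocallyIntegrable f volume := hf.locallyIntegrable one_le_two

lemma integrableOn_of_memLp {f : ℝ → ℝ} (hf : MemLp f 2 volume) (p : ℤ × ℤ) :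
    IntegrableOn f (dyad p) volume := integrableOn_dyad (memLp_locallyIntegrable hf) p

lemma integrableOn_sq {f : ℝ → ℝ} (hf : MemLp f 2 volume) (p : ℤ × ℤ) :
    IntegrableOn (fun x => f x ^ 2) (dyad p) volume := hf.integrable_sq.integrableOn

lemma integrableOn_mul {f g : ℝ → ℝ} (hf : MemLp f 2 volume) (hg : MemLp g 2 volume)
    (p : ℤ × ℤ) : IntegrableOn (fun x => f x * g x) (dyad p) volume := by
  have h1 : IntegrableOn (fun x => ((f x + g x) ^ 2 - (f x - g x) ^ 2) / 4) (dyad p) volume := by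
    exact (((hf.add hg).integrable_sq.integrableOn.sub
      (hf.sub hg).integrable_sq.integrableOn).div_const 4)
  refine h1.congr_fun (fun x _ => by ring) (measurableSet_dyad p)

lemma dyad_left_subset (p : ℤ × ℤ) : dyad (dLeft p) ⊆ dyad p := by
  rw [← dyad_union p]; exact Set.subset_union_left

lemma dyad_right_subset (p : ℤ × ℤ) : dyad (dRight p) ⊆ dyad p := by
  rw [← dyad_union p]; exact Set.subset_union_right

lemma setInt_split {F : ℝ → ℝ} {p : ℤ × ℤ} (hF : IntegrableOn F (dyad p) volume) :
    ∫ x in dyad p, F x = (∫ x in dyad (dLeft p), F x) + ∫ x in dyad (dRight p), F x := by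
  rw [← dyad_union p]
  exact setIntegral_union (dyad_disjoint p) (measurableSet_dyad _)
    (hF.mono_set (dyad_left_subset p)) (hF.mono_set (dyad_right_subset p))

lemma mul_haar_eq (f : ℝ → ℝ) (p : ℤ × ℤ) :
    (fun x => f x * haarF p x) = fun x =>
      (Real.sqrt (dLen p))⁻¹ *
        ((dyad (dLeft p)).indicator f x - (dyad (dRight p)).indicator f x) := by
  funext x
  simp only [haarF]
  by_cases hL : x ∈ dyad (dLeft p) <;> by_cases hR : x ∈ dyad (dRight p) <;>
    simp [Set.indicator_of_mem, Set.indicator_of_notMem, hL, hR] <;> ring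

lemma integrable_mul_haar {f : ℝ → ℝ} {p : ℤ × ℤ}
    (hfL : IntegrableOn f (dyad (dLeft p)) volume)
    (hfR : IntegrableOn f (dyad (dRight p)) volume) :
    Integrable (fun x => f x * haarF p x) volume := by
  rw [mul_haar_eq]
  exact (((hfL.integrable_indicator (measurableSet_dyad _)).sub
    (hfR.integrable_indicator (measurableSet_dyad _)))).const_mul _

lemma hc_eq {f : ℝ → ℝ} {p : ℤ × ℤ}
    (hfL : IntegrableOn f (dyad (dLeft p)) volume)
    (hfR : IntegrableOn f (dyad (dRight p)) volume) :
    hc f p = (Real.sqrt (dLen p))⁻¹ *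
      ((∫ x in dyad (dLeft p), f x) - ∫ x in dyad (dRight p), f x) := by
  rw [hc, mul_haar_eq]
  rw [MeasureTheory.integral_const_mul, integral_sub (hfL.integrable_indicator (measurableSet_dyad _))
    (hfR.integrable_indicator (measurableSet_dyad _)),
    integral_indicator (measurableSet_dyad _), integral_indicator (measurableSet_dyad _)]

/-- the defect `D_I f = ∫_I f² - |I| ⟨f⟩_I²` -/
def Df (f : ℝ → ℝ) (p : ℤ × ℤ) : ℝ := (∫ x in dyad p, f x ^ 2) - dLen p * (avg f p) ^ 2

lemma integral_dyad_eq (f : ℝ → ℝ) (p : ℤ × ℤ) :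
    ∫ x in dyad p, f x = dLen p * avg f p := by
  rw [avg]
  field_simp [(dLen_pos p).ne']

lemma Df_eq_integral {f : ℝ → ℝ} {p : ℤ × ℤ} (hf1 : IntegrableOn f (dyad p) volume)
    (hf2 : IntegrableOn (fun x => f x ^ 2) (dyad p) volume) :
    Df f p = ∫ x in dyad p, (f x - avg f p) ^ 2 := by
  have hconst : ∀ c : ℝ, IntegrableOn (fun _ : ℝ => c) (dyad p) volume := fun c =>
    integrableOn_const (by rw [volume_dyad]; exact ENNReal.ofReal_ne_top)
  set c := avg f p with hc
  have h1 : Integrable (fun x => f x ^ 2 - 2*c * f x) (volume.restrict (dyad p)) :=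
    hf2.sub (hf1.const_mul (2*c))
  have key : ∫ x in dyad p, (f x - c) ^ 2
      = (∫ x in dyad p, f x ^ 2) - 2*c*(∫ x in dyad p, f x) + c^2 * dLen p := by
    calc ∫ x in dyad p, (f x - c) ^ 2
        = ∫ x in dyad p, ((f x ^ 2 - 2*c * f x) + c ^ 2) := by
          refine setIntegral_congr_fun (measurableSet_dyad p) fun x _ => by ring
      _ = (∫ x in dyad p, (f x ^ 2 - 2*c * f x)) + ∫ _x in dyad p, (c^2 : ℝ) :=
          integral_add h1 (hconst (c^2))
      _ = (∫ x in dyad p, f x ^ 2) - 2*c*(∫ x in dyad p, f x) + c^2 * dLen p := by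
          rw [integral_sub hf2 (hf1.const_mul (2*c)), MeasureTheory.integral_const_mul,
            setIntegral_const, measureReal_def, volume_dyad, ENNReal.toReal_ofReal (dLen_pos p).le,
            smul_eq_mul]
          ring
  rw [Df, key]
  linear_combination (2*c) * integral_dyad_eq f p

lemma integrableOn_sub_avg_sq {f : ℝ → ℝ} {p : ℤ × ℤ} (hf1 : IntegrableOn f (dyad p) volume)
    (hf2 : IntegrableOn (fun x => f x ^ 2) (dyad p) volume) (c : ℝ) :
    IntegrableOn (fun x => (f x - c) ^ 2) (dyad p) volume := by
  have hconst : ∀ d : ℝ, IntegrableOn (fun _ : ℝ => d) (dyad p) volume := fun d =>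
    integrableOn_const (by rw [volume_dyad]; exact ENNReal.ofReal_ne_top)
  have : IntegrableOn (fun x => f x ^ 2 - (2*c) * f x + c ^ 2) (dyad p) volume :=
    (hf2.sub (hf1.const_mul (2*c))).add (hconst (c^2))
  exact this.congr_fun (fun x _ => by ring) (measurableSet_dyad p)

lemma Df_nonneg {f : ℝ → ℝ} {p : ℤ × ℤ} (hf : MemLp f 2 volume) : 0 ≤ Df f p := by
  rw [Df_eq_integral (integrableOn_of_memLp hf p) (integrableOn_sq hf p)]
  exact setIntegral_nonneg (measurableSet_dyad p) fun x _ => sq_nonneg _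

lemma Df_le {f : ℝ → ℝ} (p : ℤ × ℤ) : Df f p ≤ ∫ x in dyad p, f x ^ 2 := by
  have : 0 ≤ dLen p * (avg f p) ^ 2 := mul_nonneg (dLen_pos p).le (sq_nonneg _)
  rw [Df]; linarith

/-- one-step Pythagoras -/
lemma Df_step {f : ℝ → ℝ} (hf : MemLp f 2 volume) (p : ℤ × ℤ) :
    Df f p = hc f p ^ 2 + Df f (dLeft p) + Df f (dRight p) := by
  set L := dLeft p
  set R := dRight p
  set a := ∫ x in dyad L, f x with ha
  set b := ∫ x in dyad R, f x with hb
  have hsplit1 : ∫ x in dyad p, f x = a + b := setInt_split (integrableOn_of_memLp hf p)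
  have hsplit2 : (∫ x in dyad p, f x ^ 2)
      = (∫ x in dyad L, f x ^ 2) + ∫ x in dyad R, f x ^ 2 := setInt_split (integrableOn_sq hf p)
  have hhc : hc f p ^ 2 = (a - b) ^ 2 / dLen p := by
    rw [hc_eq (integrableOn_of_memLp hf L) (integrableOn_of_memLp hf R), mul_pow, inv_pow,
      Real.sq_sqrt (dLen_pos p).le]
    ring
  have hL : dLen L = dLen p / 2 := dLen_left p
  have hR : dLen R = dLen p / 2 := dLen_right p
  have hlen := dLen_pos p
  simp only [Df, avg, hsplit1, hsplit2, hhc, hL, hR, ← ha, ← hb]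
  field_simp
  ring

/-- telescoping over the dyadic tree -/
lemma Df_tree {f : ℝ → ℝ} (hf : MemLp f 2 volume) (m : ℕ) (p : ℤ × ℤ) :
    Df f p = (∑ i ∈ Finset.range m, ∑ q ∈ desc i p, hc f q ^ 2) + ∑ q ∈ desc m p, Df f q := by
  induction m with
  | zero => simp [desc]
  | succ m ih =>
    rw [Finset.sum_range_succ, ih]
    have : ∑ q ∈ desc m p, Df f q
        = (∑ q ∈ desc m p, hc f q ^ 2) + ∑ q ∈ desc (m+1) p, Df f q := by
      rw [desc_sum_succ (fun q => Df f q)]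
      rw [← Finset.sum_add_distrib]
      exact Finset.sum_congr rfl fun r _ => by rw [Df_step hf r]; ring
    rw [this]; ring

lemma sum_desc_integral {F : ℝ → ℝ} (hF : ∀ q : ℤ × ℤ, IntegrableOn F (dyad q) volume)
    (m : ℕ) (p : ℤ × ℤ) :
    ∑ q ∈ desc m p, ∫ x in dyad q, F x = ∫ x in dyad p, F x := by
  induction m generalizing p with
  | zero => simp [desc]
  | succ m ih =>
    rw [desc_sum_succ (fun q => ∫ x in dyad q, F x)]
    calc ∑ r ∈ desc m p, ((∫ x in dyad (dLeft r), F x) + ∫ x in dyad (dRight r), F x)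
        = ∑ r ∈ desc m p, ∫ x in dyad r, F x := by
          refine Finset.sum_congr rfl fun r _ => (setInt_split (hF r)).symm
      _ = ∫ x in dyad p, F x := ih p

lemma avg_add {u v : ℝ → ℝ} {p : ℤ × ℤ} (hu : IntegrableOn u (dyad p) volume)
    (hv : IntegrableOn v (dyad p) volume) :
    avg (fun x => u x + v x) p = avg u p + avg v p := by
  simp only [avg]
  rw [integral_add hu hv]
  ring

/-- quasi-triangle inequality for the defect -/
lemma Df_add_le {u v : ℝ → ℝ} (hu : MemLp u 2 volume) (hv : MemLp v 2 volume) (p : ℤ × ℤ) :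
    Df (fun x => u x + v x) p ≤ 2 * Df u p + 2 * Df v p := by
  have huv : MemLp (fun x => u x + v x) 2 volume := hu.add hv
  have h1 := integrableOn_of_memLp hu p
  have h2 := integrableOn_of_memLp hv p
  have h1s := integrableOn_sq hu p
  have h2s := integrableOn_sq hv p
  rw [Df_eq_integral (integrableOn_of_memLp huv p) (integrableOn_sq huv p),
    Df_eq_integral h1 h1s, Df_eq_integral h2 h2s, avg_add h1 h2]
  have key : ∫ x in dyad p, (u x + v x - (avg u p + avg v p)) ^ 2
      ≤ ∫ x in dyad p, (2 * (u x - avg u p) ^ 2 + 2 * (v x - avg v p) ^ 2) := by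
    refine setIntegral_mono_on ?_ ?_ (measurableSet_dyad p) fun x _ => by nlinarith [sq_nonneg ((u x - avg u p) - (v x - avg v p))]
    · have := integrableOn_sub_avg_sq (integrableOn_of_memLp huv p) (integrableOn_sq huv p)
        (avg u p + avg v p)
      exact this.congr_fun (fun x _ => by ring) (measurableSet_dyad p)
    · exact ((integrableOn_sub_avg_sq h1 h1s (avg u p)).const_mul 2).add
        ((integrableOn_sub_avg_sq h2 h2s (avg v p)).const_mul 2)
  have hsplit : ∫ x in dyad p, (2 * (u x - avg u p) ^ 2 + 2 * (v x - avg v p) ^ 2)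
      = 2 * (∫ x in dyad p, (u x - avg u p) ^ 2) + 2 * ∫ x in dyad p, (v x - avg v p) ^ 2 := by
    rw [integral_add ((integrableOn_sub_avg_sq h1 h1s (avg u p)).const_mul 2)
      ((integrableOn_sub_avg_sq h2 h2s (avg v p)).const_mul 2),
      MeasureTheory.integral_const_mul, MeasureTheory.integral_const_mul]
  linarith [key, hsplit.le, hsplit.ge]

/-- oscillation bound for the defect -/
lemma Df_le_of_osc {φ : ℝ → ℝ} (hφ : Continuous φ) {p : ℤ × ℤ} {δ : ℝ} (hδ : 0 ≤ δ)
    (hosc : ∀ x ∈ dyad p, ∀ y ∈ dyad p, |φ y - φ x| ≤ δ) :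
    Df φ p ≤ δ ^ 2 * dLen p := by
  have h1 : IntegrableOn φ (dyad p) volume := integrableOn_dyad hφ.locallyIntegrable p
  have h2 : IntegrableOn (fun x => φ x ^ 2) (dyad p) volume :=
    integrableOn_dyad (hφ.pow 2).locallyIntegrable p
  rw [Df_eq_integral h1 h2]
  have hptw : ∀ x ∈ dyad p, (φ x - avg φ p) ^ 2 ≤ δ ^ 2 := by
    intro x hx
    have hbd : |avg φ p - φ x| ≤ δ := by
      have : avg φ p - φ x = (dLen p)⁻¹ * ∫ y in dyad p, (φ y - φ x) := by
        rw [integral_sub h1 (integrableOn_const (by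
          rw [volume_dyad]; exact ENNReal.ofReal_ne_top)),
          setIntegral_const, measureReal_def, volume_dyad, ENNReal.toReal_ofReal (dLen_pos p).le, smul_eq_mul,
          avg]
        field_simp [(dLen_pos p).ne']
      rw [this]
      have hnorm : |∫ y in dyad p, (φ y - φ x)| ≤ δ * dLen p := by
        have := norm_setIntegral_le_of_norm_le_const (f := fun y => φ y - φ x)
          (μ := volume) (s := dyad p)
          (by rw [volume_dyad]; exact ENNReal.ofReal_lt_top)
          (fun y hy => by rw [Real.norm_eq_abs]; exact hosc x hx y hy)
        rwa [Real.norm_eq_abs, measureReal_def, volume_dyad, ENNReal.toReal_ofReal (dLen_pos p).le] at this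
      rw [abs_mul, abs_inv, abs_of_pos (dLen_pos p)]
      calc (dLen p)⁻¹ * |∫ y in dyad p, (φ y - φ x)| ≤ (dLen p)⁻¹ * (δ * dLen p) := by
            exact mul_le_mul_of_nonneg_left hnorm (inv_nonneg.2 (dLen_pos p).le)
        _ = δ := by field_simp [(dLen_pos p).ne']
    have : |φ x - avg φ p| ≤ δ := by rwa [abs_sub_comm]
    calc (φ x - avg φ p) ^ 2 = |φ x - avg φ p| ^ 2 := by rw [sq_abs]
      _ ≤ δ ^ 2 := by exact pow_le_pow_left₀ (abs_nonneg _) this 2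
  calc ∫ x in dyad p, (φ x - avg φ p) ^ 2 ≤ ∫ _x in dyad p, δ ^ 2 := by
        refine setIntegral_mono_on (integrableOn_sub_avg_sq h1 h2 _)
          (integrableOn_const (by rw [volume_dyad]; exact ENNReal.ofReal_ne_top))
          (measurableSet_dyad p) hptw
    _ = δ ^ 2 * dLen p := by
        rw [setIntegral_const, measureReal_def, volume_dyad, ENNReal.toReal_ofReal (dLen_pos p).le, smul_eq_mul]
        ring

lemma dLen_desc {q p : ℤ × ℤ} {m : ℕ} (hq : q ∈ desc m p) : dLen q = dLen p / 2 ^ m := by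
  have := mem_desc_scale hq
  simp only [dLen, this]
  rw [zpow_sub₀ (two_ne_zero : (2:ℝ) ≠ 0), zpow_natCast]

lemma sq_integral_le_of_eLpNorm {u : ℝ → ℝ} (hu : MemLp u 2 volume) {δ : ℝ} (hδ : 0 ≤ δ)
    (h : eLpNorm u 2 volume ≤ ENNReal.ofReal δ) : ∫ x, u x ^ 2 ≤ δ ^ 2 := by
  set A := ∫ x, u x ^ 2 with hA
  have hA0 : 0 ≤ A := integral_nonneg fun x => sq_nonneg _
  have h2 : eLpNorm u 2 volume = ENNReal.ofReal (A ^ (2⁻¹ : ℝ)) := by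
    have h3 := hu.eLpNorm_eq_integral_rpow_norm two_ne_zero ENNReal.ofNat_ne_top
    have htr : (2 : ℝ≥0∞).toReal = (2:ℝ) := by simp
    rw [htr] at h3
    rw [h3]
    congr 2
    refine integral_congr_ae (Filter.Eventually.of_forall fun x => ?_)
    show ‖u x‖ ^ (2:ℝ) = u x ^ 2
    rw [Real.norm_eq_abs, show (2:ℝ) = ((2:ℕ):ℝ) by norm_num, Real.rpow_natCast, sq_abs]
  rw [h2] at h
  have h3 : A ^ (2⁻¹:ℝ) ≤ δ := by
    rwa [ENNReal.ofReal_le_ofReal_iff hδ] at h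
  have h4 : (A ^ (2⁻¹:ℝ)) ^ (2:ℝ) ≤ δ ^ (2:ℝ) :=
    Real.rpow_le_rpow (Real.rpow_nonneg hA0 _) h3 (by norm_num)
  rw [← Real.rpow_mul hA0] at h4
  norm_num at h4
  exact h4

lemma Rm_tendsto {f : ℝ → ℝ} (hf : MemLp f 2 volume) (p : ℤ × ℤ) :
    Filter.Tendsto (fun m => ∑ q ∈ desc m p, Df f q) Filter.atTop (nhds 0) := by
  rw [Metric.tendsto_atTop]
  intro ε hε
  have hlp := dLen_pos p
  set δ1 := Real.sqrt (ε/8) with hδ1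
  have hδ1pos : 0 < δ1 := Real.sqrt_pos.2 (by linarith)
  obtain ⟨φ, φsupp, φnorm, φcont, φmem⟩ := hf.exists_hasCompactSupport_eLpNorm_sub_le
    ENNReal.ofNat_ne_top (by rw [Ne, ENNReal.ofReal_eq_zero]; linarith : (ENNReal.ofReal δ1) ≠ 0)
  set u := fun x => f x - φ x with hu_def
  have hu : MemLp u 2 volume := hf.sub φmem
  have hfu : f = fun x => u x + φ x := funext fun x => by simp [hu_def]
  have hInt_u : ∫ x, u x ^ 2 ≤ ε/8 := by
    have hb := sq_integral_le_of_eLpNorm hu hδ1pos.le (by exact φnorm)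
    rwa [hδ1, Real.sq_sqrt (by linarith : (0:ℝ) ≤ ε/8)] at hb
  set δ2 := Real.sqrt (ε / (8 * dLen p)) with hδ2
  have hδ2pos : 0 < δ2 := Real.sqrt_pos.2 (div_pos hε (by linarith))
  obtain ⟨η, hη, hmod⟩ := Metric.uniformContinuous_iff.mp
    (φsupp.uniformContinuous_of_continuous φcont) δ2 hδ2pos
  obtain ⟨N, hN⟩ : ∃ N : ℕ, dLen p / 2 ^ N < η := by
    obtain ⟨N, hN⟩ := exists_pow_lt_of_lt_one (div_pos hη hlp) (by norm_num : (1/2:ℝ) < 1)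
    rw [lt_div_iff₀ hlp] at hN
    refine ⟨N, ?_⟩
    have : dLen p / 2 ^ N = (1/2:ℝ) ^ N * dLen p := by
      rw [one_div, inv_pow]; ring
    rw [this]; exact hN
  refine ⟨N, fun m hm => ?_⟩
  have hRnonneg : 0 ≤ ∑ q ∈ desc m p, Df f q := Finset.sum_nonneg fun q _ => Df_nonneg hf
  have step1 : ∀ q ∈ desc m p, Df f q ≤ 2 * Df u q + 2 * Df φ q := by
    intro q _
    calc Df f q = Df (fun x => u x + φ x) q := by rw [← hfu]
      _ ≤ 2 * Df u q + 2 * Df φ q := Df_add_le hu φmem q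
  have step2 : ∑ q ∈ desc m p, Df u q ≤ ε/8 := by
    calc ∑ q ∈ desc m p, Df u q ≤ ∑ q ∈ desc m p, ∫ x in dyad q, u x ^ 2 :=
          Finset.sum_le_sum fun q _ => Df_le q
      _ = ∫ x in dyad p, u x ^ 2 := sum_desc_integral (fun q => integrableOn_sq hu q) m p
      _ ≤ ∫ x, u x ^ 2 :=
          setIntegral_le_integral hu.integrable_sq (Filter.Eventually.of_forall fun x => sq_nonneg _)
      _ ≤ ε/8 := hInt_u
  have step3 : ∑ q ∈ desc m p, Df φ q ≤ ε/8 := by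
    have hosc : ∀ q ∈ desc m p, Df φ q ≤ δ2 ^ 2 * dLen q := by
      intro q hq
      refine Df_le_of_osc φcont hδ2pos.le ?_
      intro x hx y hy
      have hlen : dLen q = dLen p / 2 ^ m := dLen_desc hq
      have hdist : dist y x < η := by
        rw [dyad_eq] at hx hy
        rw [Real.dist_eq]
        have h1 : |y - x| < dLen q := by
          rw [abs_sub_lt_iff]
          constructor <;> [skip; skip] <;>
            · obtain ⟨hx1, hx2⟩ := hx; obtain ⟨hy1, hy2⟩ := hy; linarith
        have h2m : dLen p / 2 ^ m ≤ dLen p / 2 ^ N := by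
          have h2pow : (2:ℝ) ^ N ≤ 2 ^ m := by
            apply pow_le_pow_right₀ (by norm_num : (1:ℝ) ≤ 2) hm
          exact div_le_div_of_nonneg_left hlp.le (by positivity) h2pow
        linarith [h1, hlen ▸ h1]
      have := (hmod hdist).le
      rw [Real.dist_eq] at this
      exact this
    calc ∑ q ∈ desc m p, Df φ q ≤ ∑ q ∈ desc m p, δ2 ^ 2 * dLen q := Finset.sum_le_sum hosc
      _ = δ2 ^ 2 * dLen p := by rw [← Finset.mul_sum, sum_dLen]
      _ = ε/8 := by
          rw [hδ2, Real.sq_sqrt (div_pos hε (by linarith)).le]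
          field_simp
  have total : ∑ q ∈ desc m p, Df f q ≤ ε/2 := by
    calc ∑ q ∈ desc m p, Df f q ≤ ∑ q ∈ desc m p, (2 * Df u q + 2 * Df φ q) :=
          Finset.sum_le_sum step1
      _ = 2 * (∑ q ∈ desc m p, Df u q) + 2 * ∑ q ∈ desc m p, Df φ q := by
          rw [Finset.sum_add_distrib, ← Finset.mul_sum, ← Finset.mul_sum]
      _ ≤ ε/2 := by linarith
  rw [Real.dist_eq, sub_zero, abs_of_nonneg hRnonneg]
  linarith

lemma desc_scales_disjoint {p : ℤ × ℤ} {i j : ℕ} (hij : i ≠ j) :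
    Disjoint (desc i p) (desc j p) := by
  rw [Finset.disjoint_left]
  intro q hqi hqj
  have h1 := mem_desc_scale hqi
  have h2 := mem_desc_scale hqj
  omega

lemma sum_T {M : ℕ} {p : ℤ × ℤ} (F : ℤ × ℤ → ℝ) :
    ∑ q ∈ (Finset.range M).biUnion (fun i => desc i p), F q
      = ∑ i ∈ Finset.range M, ∑ q ∈ desc i p, F q := by
  refine Finset.sum_biUnion ?_
  intro i _ j _ hij
  exact desc_scales_disjoint hij

lemma parseval_sq {f : ℝ → ℝ} (hf : MemLp f 2 volume) (p : ℤ × ℤ) :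
    HasSum (fun q : ℤ × ℤ => Set.indicator {q : ℤ × ℤ | dyad q ⊆ dyad p}
      (fun q => hc f q ^ 2) q) (Df f p) := by
  classical
  set S : Set (ℤ × ℤ) := {q : ℤ × ℤ | dyad q ⊆ dyad p} with hS
  set F : ℤ × ℤ → ℝ := fun q => Set.indicator S (fun q => hc f q ^ 2) q with hF
  have hF0 : ∀ q, 0 ≤ F q := fun q => Set.indicator_nonneg (fun a _ => sq_nonneg _) q
  have hTsum : ∀ M : ℕ, ∑ q ∈ (Finset.range M).biUnion (fun i => desc i p), F q
      = Df f p - ∑ q ∈ desc M p, Df f q := by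
    intro M
    rw [sum_T F]
    have : ∀ i, ∑ q ∈ desc i p, F q = ∑ q ∈ desc i p, hc f q ^ 2 := by
      intro i
      refine Finset.sum_congr rfl fun q hq => ?_
      exact Set.indicator_of_mem (show q ∈ S from mem_desc_subset hq) _
    simp_rw [this]
    have := Df_tree hf M p
    linarith
  refine hasSum_of_isLUB_of_nonneg _ hF0 ?_
  constructor
  · rintro x ⟨s, rfl⟩
    set M := (s.sup fun q => (p.1 - q.1).toNat) + 1 with hM
    have hfil : ∑ q ∈ s.filter (fun q => q ∈ S), F q = ∑ q ∈ s, F q := by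
      refine Finset.sum_filter_of_ne fun q _ hq => ?_
      by_contra hq'
      exact hq (Set.indicator_of_notMem hq' _)
    have hsub : s.filter (fun q => q ∈ S) ⊆ (Finset.range M).biUnion (fun i => desc i p) := by
      intro q hq
      rw [Finset.mem_filter] at hq
      obtain ⟨hqs, hqS⟩ := hq
      have hscale : q.1 ≤ p.1 := scale_le_of_subset hqS
      rw [Finset.mem_biUnion]
      refine ⟨(p.1 - q.1).toNat, ?_, mem_desc_of_subset _ (by omega) hqS⟩
      rw [Finset.mem_range]
      have : (p.1 - q.1).toNat ≤ s.sup fun q => (p.1 - q.1).toNat :=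
        Finset.le_sup (f := fun q => (p.1 - q.1).toNat) hqs
      omega
    calc ∑ q ∈ s, F q = ∑ q ∈ s.filter (fun q => q ∈ S), F q := hfil.symm
      _ ≤ ∑ q ∈ (Finset.range M).biUnion (fun i => desc i p), F q :=
          Finset.sum_le_sum_of_subset_of_nonneg hsub fun q _ _ => hF0 q
      _ = Df f p - ∑ q ∈ desc M p, Df f q := hTsum M
      _ ≤ Df f p := by
          have : 0 ≤ ∑ q ∈ desc M p, Df f q := Finset.sum_nonneg fun q _ => Df_nonneg hf
          linarith
  · intro b hb
    refine le_of_forall_pos_le_add fun ε hε => ?_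
    obtain ⟨M, hM⟩ := Metric.tendsto_atTop.mp (Rm_tendsto hf p) ε hε
    have hMle := hM M (le_refl M)
    rw [Real.dist_eq, sub_zero] at hMle
    have hRlt : ∑ q ∈ desc M p, Df f q < ε := lt_of_abs_lt hMle
    have hmem : ∑ q ∈ (Finset.range M).biUnion (fun i => desc i p), F q ∈
        Set.range fun s : Finset (ℤ × ℤ) => ∑ q ∈ s, F q :=
      ⟨(Finset.range M).biUnion (fun i => desc i p), rfl⟩
    have := hb hmem
    rw [hTsum M] at this
    linarith

lemma hc_add {f g : ℝ → ℝ} (hf : MemLp f 2 volume) (hg : MemLp g 2 volume) (p : ℤ × ℤ) :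
    hc (fun x => f x + g x) p = hc f p + hc g p := by
  have h1 := integrable_mul_haar (integrableOn_of_memLp hf (dLeft p)) (integrableOn_of_memLp hf (dRight p))
  have h2 := integrable_mul_haar (integrableOn_of_memLp hg (dLeft p)) (integrableOn_of_memLp hg (dRight p))
  simp only [hc, add_mul]
  exact integral_add h1 h2

lemma hc_sub {f g : ℝ → ℝ} (hf : MemLp f 2 volume) (hg : MemLp g 2 volume) (p : ℤ × ℤ) :
    hc (fun x => f x - g x) p = hc f p - hc g p := by
  have h1 := integrable_mul_haar (integrableOn_of_memLp hf (dLeft p)) (integrableOn_of_memLp hf (dRight p))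
  have h2 := integrable_mul_haar (integrableOn_of_memLp hg (dLeft p)) (integrableOn_of_memLp hg (dRight p))
  simp only [hc, sub_mul]
  exact integral_sub h1 h2

lemma avg_sub {u v : ℝ → ℝ} {p : ℤ × ℤ} (hu : IntegrableOn u (dyad p) volume)
    (hv : IntegrableOn v (dyad p) volume) :
    avg (fun x => u x - v x) p = avg u p - avg v p := by
  simp only [avg]
  rw [integral_sub hu hv]
  ring

lemma parseval_mul {f g : ℝ → ℝ} (hf : MemLp f 2 volume) (hg : MemLp g 2 volume) (p : ℤ × ℤ) :
    HasSum (fun q : ℤ × ℤ => Set.indicator {q : ℤ × ℤ | dyad q ⊆ dyad p}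
      (fun q => hc f q * hc g q) q)
      ((∫ x in dyad p, f x * g x) - dLen p * (avg f p * avg g p)) := by
  have hfg : MemLp (fun x => f x + g x) 2 volume := hf.add hg
  have hfg' : MemLp (fun x => f x - g x) 2 volume := hf.sub hg
  have h1 := parseval_sq hfg p
  have h2 := parseval_sq hfg' p
  have h12 := (h1.sub h2).div_const 4
  have hfun : (fun q : ℤ × ℤ =>
      (Set.indicator {q : ℤ × ℤ | dyad q ⊆ dyad p} (fun q => hc (fun x => f x + g x) q ^ 2) q -
       Set.indicator {q : ℤ × ℤ | dyad q ⊆ dyad p} (fun q => hc (fun x => f x - g x) q ^ 2) q) / 4)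
      = fun q : ℤ × ℤ => Set.indicator {q : ℤ × ℤ | dyad q ⊆ dyad p}
        (fun q => hc f q * hc g q) q := by
    funext q
    by_cases hq : q ∈ {q : ℤ × ℤ | dyad q ⊆ dyad p}
    · rw [Set.indicator_of_mem hq, Set.indicator_of_mem hq, Set.indicator_of_mem hq,
        hc_add hf hg, hc_sub hf hg]
      ring
    · rw [Set.indicator_of_notMem hq, Set.indicator_of_notMem hq, Set.indicator_of_notMem hq]
      norm_num
  have hval : (Df (fun x => f x + g x) p - Df (fun x => f x - g x) p) / 4
      = (∫ x in dyad p, f x * g x) - dLen p * (avg f p * avg g p) := by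
    have hif := integrableOn_of_memLp hf p
    have hig := integrableOn_of_memLp hg p
    have hmul := integrableOn_mul hf hg p
    have hsq1 := integrableOn_sq hfg p
    have hsq2 := integrableOn_sq hfg' p
    have eS : (∫ x in dyad p, (f x + g x) ^ 2) - (∫ x in dyad p, (f x - g x) ^ 2)
        = 4 * ∫ x in dyad p, f x * g x := by
      rw [← integral_sub hsq1 hsq2, ← MeasureTheory.integral_const_mul]
      refine setIntegral_congr_fun (measurableSet_dyad p) fun x _ => by ring
    simp only [Df, avg_add hif hig, avg_sub hif hig]
    rw [show (∫ x in dyad p, (fun x => f x + g x) x ^ 2) = ∫ x in dyad p, (f x + g x) ^ 2 from rfl]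
    linarith [eS]
  rw [hfun, hval] at h12
  exact h12

end HaarAux

open HaarAux

set_option maxHeartbeats 1000000 in
/-- Product formula for Haar coefficients:
`⟨fg, h_I⟩ = Σ_{J ⊊ I} ⟨f,h_J⟩⟨g,h_J⟩ δ(J,I)/√|I| + ⟨f,h_I⟩⟨g⟩_I + ⟨g,h_I⟩⟨f⟩_I`. -/
theorem statement0 (f g : ℝ → ℝ) (hf : MemLp f 2 volume) (hg : MemLp g 2 volume)
    (hfg : LocallyIntegrable (fun x => f x * g x) volume) (p : ℤ × ℤ) :
    HasSum
      (fun J : {q : ℤ × ℤ // dyad q ⊂ dyad p} =>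
        hc f J.1 * hc g J.1 * dsgn J.1 p / Real.sqrt (dLen p))
      (hc (fun x => f x * g x) p - hc f p * avg g p - hc g p * avg f p) := by
  classical
  have hs : (0:ℝ) < Real.sqrt (dLen p) := Real.sqrt_pos.2 (dLen_pos p)
  set s := Real.sqrt (dLen p) with hsdef
  have hL := parseval_mul hf hg (dLeft p)
  have hR := parseval_mul hf hg (dRight p)
  have h := (hL.div_const s).sub (hR.div_const s)
  -- rewrite the function
  have hfun : (fun q : ℤ × ℤ =>
      Set.indicator {q : ℤ × ℤ | dyad q ⊆ dyad (dLeft p)} (fun q => hc f q * hc g q) q / s -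
      Set.indicator {q : ℤ × ℤ | dyad q ⊆ dyad (dRight p)} (fun q => hc f q * hc g q) q / s)
      = Set.indicator {q : ℤ × ℤ | dyad q ⊂ dyad p}
          (fun q => hc f q * hc g q * dsgn q p / s) := by
    funext q
    by_cases hqL : dyad q ⊆ dyad (dLeft p)
    · have hqR : ¬ dyad q ⊆ dyad (dRight p) := fun hqR => not_subset_both hqL hqR
      have hss : q ∈ {q : ℤ × ℤ | dyad q ⊂ dyad p} := dyad_ssubset_iff.2 (Or.inl hqL)
      rw [Set.indicator_of_mem (show q ∈ {q : ℤ × ℤ | dyad q ⊆ dyad (dLeft p)} from hqL),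
        Set.indicator_of_notMem (show q ∉ {q : ℤ × ℤ | dyad q ⊆ dyad (dRight p)} from hqR),
        Set.indicator_of_mem hss, dsgn, if_pos hqL]
      ring
    · by_cases hqR : dyad q ⊆ dyad (dRight p)
      · have hss : q ∈ {q : ℤ × ℤ | dyad q ⊂ dyad p} := dyad_ssubset_iff.2 (Or.inr hqR)
        rw [Set.indicator_of_notMem (show q ∉ {q : ℤ × ℤ | dyad q ⊆ dyad (dLeft p)} from hqL),
          Set.indicator_of_mem (show q ∈ {q : ℤ × ℤ | dyad q ⊆ dyad (dRight p)} from hqR),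
          Set.indicator_of_mem hss, dsgn, if_neg hqL]
        ring
      · have hss : q ∉ {q : ℤ × ℤ | dyad q ⊂ dyad p} := fun hss => by
          rcases dyad_ssubset_iff.1 hss with h' | h'
          exacts [hqL h', hqR h']
        rw [Set.indicator_of_notMem (show q ∉ {q : ℤ × ℤ | dyad q ⊆ dyad (dLeft p)} from hqL),
          Set.indicator_of_notMem (show q ∉ {q : ℤ × ℤ | dyad q ⊆ dyad (dRight p)} from hqR),
          Set.indicator_of_notMem hss]
        ring
  -- rewrite the value
  set a := ∫ x in dyad (dLeft p), f x with ha
  set b := ∫ x in dyad (dRight p), f x with hb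
  set c := ∫ x in dyad (dLeft p), g x with hc'
  set d := ∫ x in dyad (dRight p), g x with hd
  set m1 := ∫ x in dyad (dLeft p), f x * g x with hm1
  set m2 := ∫ x in dyad (dRight p), f x * g x with hm2
  have hlell := dLen_pos (dLeft p)
  have hlL : dLen (dLeft p) = dLen p / 2 := dLen_left p
  have hlR : dLen (dRight p) = dLen p / 2 := dLen_right p
  have hs2 : s ^ 2 = dLen p := Real.sq_sqrt (dLen_pos p).le
  have hlp := dLen_pos p
  have hval : ((∫ x in dyad (dLeft p), f x * g x) -
        dLen (dLeft p) * (avg f (dLeft p) * avg g (dLeft p))) / s -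
      ((∫ x in dyad (dRight p), f x * g x) -
        dLen (dRight p) * (avg f (dRight p) * avg g (dRight p))) / s
      = hc (fun x => f x * g x) p - hc f p * avg g p - hc g p * avg f p := by
    have hhcfg : hc (fun x => f x * g x) p = s⁻¹ * (m1 - m2) :=
      hc_eq (integrableOn_dyad hfg (dLeft p)) (integrableOn_dyad hfg (dRight p))
    have hhcf : hc f p = s⁻¹ * (a - b) :=
      hc_eq (integrableOn_of_memLp hf (dLeft p)) (integrableOn_of_memLp hf (dRight p))
    have hhcg : hc g p = s⁻¹ * (c - d) :=
      hc_eq (integrableOn_of_memLp hg (dLeft p)) (integrableOn_of_memLp hg (dRight p))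
    have havgf : avg f p = (dLen p)⁻¹ * (a + b) := by
      rw [avg, setInt_split (integrableOn_of_memLp hf p)]
    have havgg : avg g p = (dLen p)⁻¹ * (c + d) := by
      rw [avg, setInt_split (integrableOn_of_memLp hg p)]
    have havgfL : avg f (dLeft p) = (dLen (dLeft p))⁻¹ * a := rfl
    have havgfR : avg f (dRight p) = (dLen (dRight p))⁻¹ * b := rfl
    have havggL : avg g (dLeft p) = (dLen (dLeft p))⁻¹ * c := rfl
    have havggR : avg g (dRight p) = (dLen (dRight p))⁻¹ * d := rfl
    rw [hhcfg, hhcf, hhcg, havgf, havgg, havgfL, havgfR, havggL, havggR, hlL, hlR]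
    field_simp
    ring
  rw [hval] at h
  rw [hfun] at h
  exact (hasSum_subtype_iff_indicator).2 h
end
end

section
/- Let w ∈ A₂ on ℝ. Then for every dyadic interval I: Σ_{J⊆I} (⟨w^{-1/2}, h_J⟩)² ⟨w⟩_J ≲ [w]²_{A₂} |I|, with implied constant independent of w and I. -/
open MeasureTheory Set
open scoped ENNReal

noncomputable section

set_option maxHeartbeats 1000000

namespace S6

lemma dLen_pos (p : ℤ × ℤ) : 0 < dLen p := by
  unfold dLen; positivity

lemma two_zpow_pos (n : ℤ) : (0:ℝ) < 2 ^ n := by positivity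

lemma zpow_sub_one' (n : ℤ) : (2:ℝ) ^ (n - 1) = 2 ^ n / 2 := by
  rw [zpow_sub_one₀ (by norm_num : (2:ℝ) ≠ 0)]; ring

lemma dLen_dLeft (p : ℤ × ℤ) : dLen (dLeft p) = dLen p / 2 := by
  simp only [dLen, dLeft]; exact zpow_sub_one' p.1

lemma dLen_dRight (p : ℤ × ℤ) : dLen (dRight p) = dLen p / 2 := by
  simp only [dLen, dRight]; exact zpow_sub_one' p.1

lemma dyad_endpoint_lt (p : ℤ × ℤ) : ((p.2 : ℝ)) * 2 ^ p.1 < ((p.2 : ℝ) + 1) * 2 ^ p.1 := by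
  have := two_zpow_pos p.1; nlinarith

lemma dyad_nonempty (p : ℤ × ℤ) : (dyad p).Nonempty := by
  exact Set.nonempty_Ico.2 (dyad_endpoint_lt p)

lemma measurableSet_dyad (p : ℤ × ℤ) : MeasurableSet (dyad p) := measurableSet_Ico

lemma dyad_dLeft (p : ℤ × ℤ) :
    dyad (dLeft p) = Set.Ico ((p.2 : ℝ) * 2 ^ p.1) ((p.2 : ℝ) * 2 ^ p.1 + dLen p / 2) := by
  have h := zpow_sub_one' p.1
  simp only [dyad, dLeft, dLen]
  rw [h]; push_cast; ring_nf

lemma dyad_dRight (p : ℤ × ℤ) :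
    dyad (dRight p) =
      Set.Ico ((p.2 : ℝ) * 2 ^ p.1 + dLen p / 2) (((p.2 : ℝ) + 1) * 2 ^ p.1) := by
  have h := zpow_sub_one' p.1
  simp only [dyad, dRight, dLen]
  rw [h]; push_cast; ring_nf

lemma dyad_union (p : ℤ × ℤ) : dyad (dLeft p) ∪ dyad (dRight p) = dyad p := by
  rw [dyad_dLeft, dyad_dRight]
  have hL := dLen_pos p
  have h1 : (p.2 : ℝ) * 2 ^ p.1 ≤ (p.2 : ℝ) * 2 ^ p.1 + dLen p / 2 := by linarith
  have h2 : (p.2 : ℝ) * 2 ^ p.1 + dLen p / 2 ≤ ((p.2 : ℝ) + 1) * 2 ^ p.1 := by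
    have : dLen p = 2 ^ p.1 := rfl
    nlinarith
  rw [Set.Ico_union_Ico_eq_Ico h1 h2, dyad]

lemma dyad_disjoint (p : ℤ × ℤ) : Disjoint (dyad (dLeft p)) (dyad (dRight p)) := by
  rw [dyad_dLeft, dyad_dRight]
  exact Set.Ico_disjoint_Ico_same

lemma dyad_dLeft_subset (p : ℤ × ℤ) : dyad (dLeft p) ⊆ dyad p := by
  rw [← dyad_union p]; exact Set.subset_union_left

lemma dyad_dRight_subset (p : ℤ × ℤ) : dyad (dRight p) ⊆ dyad p := by
  rw [← dyad_union p]; exact Set.subset_union_right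

lemma volume_dyad (p : ℤ × ℤ) : volume (dyad p) = ENNReal.ofReal (dLen p) := by
  rw [dyad, Real.volume_Ico]
  congr 1
  have : dLen p = 2 ^ p.1 := rfl
  rw [this]; ring

lemma volume_dyad_lt_top (p : ℤ × ℤ) : volume (dyad p) < ⊤ := by
  rw [volume_dyad]; exact ENNReal.ofReal_lt_top


lemma dyad_subset_iff' {q p : ℤ × ℤ} (h : q.1 ≤ p.1) :
    dyad q ⊆ dyad p ↔
      (p.2 * 2 ^ (p.1 - q.1).toNat ≤ q.2 ∧ q.2 + 1 ≤ (p.2 + 1) * 2 ^ (p.1 - q.1).toNat) := by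
  set d : ℕ := (p.1 - q.1).toNat with hd
  have hp1 : p.1 = q.1 + (d : ℤ) := by omega
  have h2 : (2:ℝ) ^ p.1 = ((2 ^ d : ℤ) : ℝ) * 2 ^ q.1 := by
    rw [hp1, zpow_add₀ (by norm_num : (2:ℝ) ≠ 0)]
    push_cast
    rw [zpow_natCast]
    ring
  rw [dyad, dyad, Set.Ico_subset_Ico_iff (dyad_endpoint_lt q), h2]
  have hq := two_zpow_pos q.1
  constructor
  · rintro ⟨h1, h3⟩
    constructor
    · have := (mul_le_mul_iff_left₀ hq).1 (by linarith [h1] : ((p.2:ℝ) * (2 ^ d : ℤ)) * 2 ^ q.1 ≤ (q.2:ℝ) * 2 ^ q.1)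
      exact_mod_cast this
    · have := (mul_le_mul_iff_left₀ hq).1 (by linarith [h3] : ((q.2:ℝ) + 1) * 2 ^ q.1 ≤ (((p.2:ℝ) + 1) * (2 ^ d : ℤ)) * 2 ^ q.1)
      exact_mod_cast this
  · rintro ⟨h1, h3⟩
    have h1' : ((p.2 * 2 ^ d : ℤ) : ℝ) ≤ (q.2 : ℝ) := by exact_mod_cast h1
    have h3' : ((q.2 : ℝ) + 1) ≤ (((p.2 + 1) * 2 ^ d : ℤ) : ℝ) := by exact_mod_cast h3
    constructor
    · push_cast at h1' ⊢
      nlinarith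
    · push_cast at h3' ⊢
      nlinarith

lemma fst_le_of_subset {q p : ℤ × ℤ} (h : dyad q ⊆ dyad p) : q.1 ≤ p.1 := by
  rw [dyad, dyad, Set.Ico_subset_Ico_iff (dyad_endpoint_lt q)] at h
  obtain ⟨h1, h2⟩ := h
  have hlen : (2:ℝ) ^ q.1 ≤ 2 ^ p.1 := by nlinarith
  exact (zpow_le_zpow_iff_right₀ (by norm_num : (1:ℝ) < 2)).1 hlen

lemma eq_of_subset_fst_eq {q p : ℤ × ℤ} (h : dyad q ⊆ dyad p) (hf : q.1 = p.1) : q = p := by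
  rw [dyad_subset_iff' (le_of_eq hf)] at h
  have h0 : (p.1 - q.1).toNat = 0 := by omega
  rw [h0] at h
  simp only [pow_zero, mul_one] at h
  exact Prod.ext hf (by omega)

lemma dParent_fst (q : ℤ × ℤ) : (dParent q).1 = q.1 + 1 := rfl

lemma dyad_subset_dParent (q : ℤ × ℤ) : dyad q ⊆ dyad (dParent q) := by
  rw [dyad_subset_iff' (by rw [dParent_fst]; omega)]
  have hd : ((dParent q).1 - q.1).toNat = 1 := by rw [dParent_fst]; omega
  rw [hd]
  simp only [dParent, Int.fdiv_eq_ediv_of_nonneg _ (by norm_num : (0:ℤ) ≤ 2)]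
  omega

lemma child_eq (q : ℤ × ℤ) : q = dLeft (dParent q) ∨ q = dRight (dParent q) := by
  simp only [dLeft, dRight, dParent, Int.fdiv_eq_ediv_of_nonneg _ (by norm_num : (0:ℤ) ≤ 2)]
  rcases Int.emod_two_eq_zero_or_one q.2 with h | h
  · left; exact Prod.ext (by omega) (by omega)
  · right; exact Prod.ext (by omega) (by omega)

lemma dParent_subset {q p : ℤ × ℤ} (h : dyad q ⊆ dyad p) (hlt : q.1 < p.1) :
    dyad (dParent q) ⊆ dyad p := by
  have hle : q.1 ≤ p.1 := le_of_lt hlt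
  rw [dyad_subset_iff' hle] at h
  rw [dyad_subset_iff' (by rw [dParent_fst]; omega), dParent_fst]
  have hd : (p.1 - q.1).toNat = (p.1 - (q.1 + 1)).toNat + 1 := by omega
  rw [hd, pow_succ] at h
  simp only [dParent, Int.fdiv_eq_ediv_of_nonneg _ (by norm_num : (0:ℤ) ≤ 2)]
  obtain ⟨E, hE⟩ : ∃ E, E = (2:ℤ) ^ (p.1 - (q.1 + 1)).toNat := ⟨_, rfl⟩
  rw [← hE] at h ⊢
  obtain ⟨a, ha⟩ : ∃ a, a = p.2 * E := ⟨_, rfl⟩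
  obtain ⟨b, hb⟩ : ∃ b, b = (p.2 + 1) * E := ⟨_, rfl⟩
  have hab : p.2 * (E * 2) = 2 * a := by rw [ha]; ring
  have hbb : (p.2 + 1) * (E * 2) = 2 * b := by rw [hb]; ring
  rw [hab, hbb] at h
  rw [← ha, ← hb]
  omega

def chl (p : ℤ × ℤ) : ℕ → Finset (ℤ × ℤ)
  | 0 => {p}
  | k + 1 => (chl p k).biUnion fun r => {dLeft r, dRight r}

lemma chl_fst (p : ℤ × ℤ) : ∀ k, ∀ q ∈ chl p k, q.1 = p.1 - k := by
  intro k
  induction k with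
  | zero => intro q hq; simp [chl] at hq; simp [hq]
  | succ n ih =>
    intro q hq
    simp only [chl, Finset.mem_biUnion] at hq
    obtain ⟨r, hr, hq⟩ := hq
    have := ih r hr
    simp only [Finset.mem_insert, Finset.mem_singleton] at hq
    rcases hq with h | h <;> subst h <;>
      · simp only [dLeft, dRight]
        omega

lemma mem_chl (p : ℤ × ℤ) : ∀ k : ℕ, ∀ q : ℤ × ℤ, dyad q ⊆ dyad p → q.1 = p.1 - (k:ℤ) → q ∈ chl p k := by
  intro k
  induction k with
  | zero =>
    intro q hs hf
    have : q = p := eq_of_subset_fst_eq hs (by omega)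
    simp [chl, this]
  | succ n ih =>
    intro q hs hf
    have hlt : q.1 < p.1 := by omega
    have hps : dyad (dParent q) ⊆ dyad p := dParent_subset hs hlt
    have hmem := ih (dParent q) hps (by rw [dParent_fst]; omega)
    simp only [chl, Finset.mem_biUnion]
    refine ⟨dParent q, hmem, ?_⟩
    simp only [Finset.mem_insert, Finset.mem_singleton]
    rcases child_eq q with h | h
    · left; exact h
    · right; exact h

lemma dLeft_ne_dRight (r : ℤ × ℤ) : dLeft r ≠ dRight r := by
  simp only [dLeft, dRight, Ne, Prod.ext_iff, not_and]
  intro _; omega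

lemma chl_sum_succ (p : ℤ × ℤ) (k : ℕ) (φ : ℤ × ℤ → ℝ) :
    ∑ q ∈ chl p (k + 1), φ q = ∑ r ∈ chl p k, (φ (dLeft r) + φ (dRight r)) := by
  have hdisj : (chl p k : Set (ℤ × ℤ)).PairwiseDisjoint
      (fun r => ({dLeft r, dRight r} : Finset (ℤ × ℤ))) := by
    intro r₁ h1 r₂ h2 hne
    have hf1 := chl_fst p k r₁ h1
    have hf2 := chl_fst p k r₂ h2
    simp only [Finset.disjoint_left, Finset.mem_insert, Finset.mem_singleton]
    rintro x (hx | hx) (hy | hy) <;> subst hx <;>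
      simp only [dLeft, dRight, Prod.ext_iff] at hy <;>
      exact absurd (Prod.ext (by omega) (by omega) : r₁ = r₂) hne
  rw [chl, Finset.sum_biUnion hdisj]
  refine Finset.sum_congr rfl fun r _ => ?_
  rw [Finset.sum_pair (dLeft_ne_dRight r)]


lemma integrableOn_dyad {f : ℝ → ℝ} (hf : LocallyIntegrable f volume) (p : ℤ × ℤ) :
    IntegrableOn f (dyad p) volume := by
  have h := hf.integrableOn_isCompact
    (isCompact_Icc (a := (p.2 : ℝ) * 2 ^ p.1) (b := ((p.2 : ℝ) + 1) * 2 ^ p.1))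
  exact h.mono_set Set.Ico_subset_Icc_self

lemma cs_sq {μ : Measure ℝ} {f g : ℝ → ℝ} (hf0 : 0 ≤ᵐ[μ] f) (hg0 : 0 ≤ᵐ[μ] g)
    (hfm : AEStronglyMeasurable f μ) (hgm : AEStronglyMeasurable g μ)
    (hf2 : Integrable (fun x => f x ^ 2) μ) (hg2 : Integrable (fun x => g x ^ 2) μ) :
    (∫ x, f x * g x ∂μ) ^ 2 ≤ (∫ x, f x ^ 2 ∂μ) * (∫ x, g x ^ 2 ∂μ) := by
  have hpq : Real.HolderConjugate 2 2 := Real.HolderConjugate.two_two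
  have h2 : ENNReal.ofReal (2:ℝ) = 2 := by norm_num
  have hfl : MemLp f (ENNReal.ofReal (2:ℝ)) μ := by
    rw [h2]; exact (memLp_two_iff_integrable_sq hfm).2 hf2
  have hgl : MemLp g (ENNReal.ofReal (2:ℝ)) μ := by
    rw [h2]; exact (memLp_two_iff_integrable_sq hgm).2 hg2
  have h := MeasureTheory.integral_mul_le_Lp_mul_Lq_of_nonneg hpq hf0 hg0 hfl hgl
  have hr2 : ∀ x : ℝ, x ^ (2:ℝ) = x ^ (2:ℕ) := fun x => by
    rw [show (2:ℝ) = ((2:ℕ):ℝ) by norm_num, Real.rpow_natCast]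
  simp_rw [hr2] at h
  have hX : (0:ℝ) ≤ ∫ x, f x ^ 2 ∂μ := integral_nonneg fun x => sq_nonneg _
  have hY : (0:ℝ) ≤ ∫ x, g x ^ 2 ∂μ := integral_nonneg fun x => sq_nonneg _
  have hI : (0:ℝ) ≤ ∫ x, f x * g x ∂μ := by
    apply integral_nonneg_of_ae
    filter_upwards [hf0, hg0] with x h1 h2 using mul_nonneg h1 h2
  calc (∫ x, f x * g x ∂μ) ^ 2
      ≤ ((∫ x, f x ^ 2 ∂μ) ^ (1/2:ℝ) * (∫ x, g x ^ 2 ∂μ) ^ (1/2:ℝ)) ^ 2 := by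
        apply pow_le_pow_left₀ hI h 2
    _ = (∫ x, f x ^ 2 ∂μ) * (∫ x, g x ^ 2 ∂μ) := by
        rw [mul_pow, ← Real.rpow_natCast _ 2, ← Real.rpow_natCast _ 2,
          ← Real.rpow_mul hX, ← Real.rpow_mul hY]
        norm_num

lemma integral_dyad_split {f : ℝ → ℝ} (hf : LocallyIntegrable f volume) (p : ℤ × ℤ) :
    ∫ x in dyad p, f x = (∫ x in dyad (dLeft p), f x) + ∫ x in dyad (dRight p), f x := by
  rw [← dyad_union p]
  exact setIntegral_union (dyad_disjoint p) (measurableSet_dyad _)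
    (integrableOn_dyad hf _) (integrableOn_dyad hf _)

lemma avg_mid {f : ℝ → ℝ} (hf : LocallyIntegrable f volume) (p : ℤ × ℤ) :
    avg f p = (avg f (dLeft p) + avg f (dRight p)) / 2 := by
  have hL := dLen_pos p
  unfold avg
  rw [integral_dyad_split hf p, dLen_dLeft, dLen_dRight]
  field_simp

lemma hc_eq {f : ℝ → ℝ} (hf : LocallyIntegrable f volume) (p : ℤ × ℤ) :
    hc f p = (Real.sqrt (dLen p))⁻¹ *
      ((∫ x in dyad (dLeft p), f x) - ∫ x in dyad (dRight p), f x) := by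
  have key : ∀ (S : Set ℝ) (x : ℝ),
      f x * S.indicator (fun _ => (1:ℝ)) x = S.indicator f x := by
    intro S x
    by_cases h : x ∈ S <;> simp [h]
  unfold hc haarF
  have step : ∀ x : ℝ, f x * ((Real.sqrt (dLen p))⁻¹ *
      ((dyad (dLeft p)).indicator (fun _ => (1:ℝ)) x -
        (dyad (dRight p)).indicator (fun _ => (1:ℝ)) x)) =
      (Real.sqrt (dLen p))⁻¹ *
        ((dyad (dLeft p)).indicator f x - (dyad (dRight p)).indicator f x) := by
    intro x
    rw [← key (dyad (dLeft p)) x, ← key (dyad (dRight p)) x]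
    ring
  simp_rw [step]
  rw [integral_const_mul, integral_sub
    ((integrable_indicator_iff (measurableSet_dyad _)).2 (integrableOn_dyad hf _))
    ((integrable_indicator_iff (measurableSet_dyad _)).2 (integrableOn_dyad hf _)),
    integral_indicator (measurableSet_dyad _), integral_indicator (measurableSet_dyad _)]

lemma hc_sq {f : ℝ → ℝ} (hf : LocallyIntegrable f volume) (p : ℤ × ℤ) :
    (hc f p) ^ 2 = dLen p * ((avg f (dLeft p) - avg f (dRight p)) / 2) ^ 2 := by
  have hL := dLen_pos p
  have hsq : Real.sqrt (dLen p) ^ 2 = dLen p := Real.sq_sqrt hL.le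
  have hs0 : 0 < Real.sqrt (dLen p) := Real.sqrt_pos.2 hL
  rw [hc_eq hf p]
  have h1 : ∫ x in dyad (dLeft p), f x = dLen (dLeft p) * avg f (dLeft p) := by
    unfold avg
    field_simp [(dLen_pos (dLeft p)).ne']
  have h2 : ∫ x in dyad (dRight p), f x = dLen (dRight p) * avg f (dRight p) := by
    unfold avg
    field_simp [(dLen_pos (dRight p)).ne']
  rw [h1, h2, dLen_dLeft, dLen_dRight, mul_pow]
  rw [show ((Real.sqrt (dLen p))⁻¹)^2 = (dLen p)⁻¹ by rw [inv_pow, hsq]]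
  field_simp

lemma avg_nonneg {f : ℝ → ℝ} (hf : ∀ x, 0 ≤ f x) (p : ℤ × ℤ) : 0 ≤ avg f p := by
  unfold avg
  apply mul_nonneg (inv_nonneg.2 (dLen_pos p).le)
  exact setIntegral_nonneg (measurableSet_dyad p) fun x _ => hf x

lemma avg_pos {f : ℝ → ℝ} (hf : ∀ x, 0 < f x) (hfi : LocallyIntegrable f volume) (p : ℤ × ℤ) :
    0 < avg f p := by
  unfold avg
  apply mul_pos (inv_pos.2 (dLen_pos p))
  rw [setIntegral_pos_iff_support_of_nonneg_ae
    (Filter.Eventually.of_forall fun x => (hf x).le) (integrableOn_dyad hfi p)]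
  have hsupp : Function.support f = Set.univ := by
    ext x; simp [Function.support, (hf x).ne']
  rw [hsupp, Set.univ_inter, volume_dyad]
  exact ENNReal.ofReal_pos.2 (dLen_pos p)


/-- Bellman concavity defect inequality. -/
lemma bellman_defect {A uL uR mL mR : ℝ} (huL : 0 < uL) (huR : 0 < uR)
    (hmL : 0 < mL) (hmR : 0 < mR)
    (hcA : ((uL + uR) / 2) * (((mL + mR) / 2) ^ 2) ≤ A) :
    ((uL + uR) / 2) * (((mL - mR) / 2) ^ 2) ≤
      (2 * A ^ 2 - 2 * A ^ 2 * (((uL + uR) / 2) * (((mL + mR) / 2) ^ 2))⁻¹) -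
        ((2 * A ^ 2 - 2 * A ^ 2 * (uL * mL ^ 2)⁻¹) +
          (2 * A ^ 2 - 2 * A ^ 2 * (uR * mR ^ 2)⁻¹)) / 2 := by
  set u : ℝ := (uL + uR) / 2 with hu
  set m : ℝ := (mL + mR) / 2 with hm
  set α : ℝ := (uR - uL) / 2 with hα
  set β : ℝ := (mR - mL) / 2 with hβ
  set a : ℝ := uL * mL ^ 2 with ha
  set b : ℝ := uR * mR ^ 2 with hb
  set c : ℝ := u * m ^ 2 with hc
  have hsym : ((mL - mR) / 2) ^ 2 = β ^ 2 := by rw [hβ]; ring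
  rw [hsym]
  have hu0 : 0 < u := by rw [hu]; linarith
  have hm0 : 0 < m := by rw [hm]; linarith
  have ha0 : 0 < a := by positivity
  have hb0 : 0 < b := by positivity
  have hc0 : 0 < c := by positivity
  have hA0 : 0 < A := lt_of_lt_of_le hc0 hcA
  set N : ℝ := u ^ 2 * m ^ 4 + u ^ 2 * m ^ 2 * β ^ 2 + 2 * u * m ^ 3 * α * β - a * b with hN
  -- the div-free identity (M)
  have hbe2 : β ^ 2 ≤ m ^ 2 := by
    have : m ^ 2 - β ^ 2 = mL * mR := by rw [hm, hβ]; ring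
    nlinarith [mul_pos hmL hmR]
  have hkey : 2 * m ^ 2 * N - β ^ 2 * (a * b) =
      2 * m ^ 4 * (α * m + u * β) ^ 2 + uL * uR * β ^ 2 * (3 * m ^ 4 - β ^ 4) := by
    rw [hN, ha, hb, hu, hm, hα, hβ]; ring
  have h34 : 0 ≤ 3 * m ^ 4 - β ^ 4 := by nlinarith [hbe2, sq_nonneg β, sq_nonneg m]
  have t1 : 0 ≤ 2 * m ^ 4 * (α * m + u * β) ^ 2 := by positivity
  have t2 : 0 ≤ uL * uR * β ^ 2 * (3 * m ^ 4 - β ^ 4) := by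
    apply mul_nonneg (by positivity) h34
  have hNpos : β ^ 2 * (a * b) ≤ 2 * m ^ 2 * N := by linarith [hkey, t1, t2]
  -- identity relating N to averages
  have hbcN : b * c + a * c - 2 * (a * b) = 2 * N := by
    rw [hN, ha, hb, hc, hu, hm, hα, hβ]; ring
  -- rewrite RHS of the goal
  have hRHS : (2 * A ^ 2 - 2 * A ^ 2 * c⁻¹) -
      ((2 * A ^ 2 - 2 * A ^ 2 * a⁻¹) + (2 * A ^ 2 - 2 * A ^ 2 * b⁻¹)) / 2 =
      A ^ 2 * (b * c + a * c - 2 * (a * b)) / (a * b * c) := by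
    field_simp
    ring
  rw [hRHS, le_div_iff₀ (by positivity : (0:ℝ) < a * b * c)]
  -- final chain multiplied by m^2
  have hm2 : (0:ℝ) < m ^ 2 := by positivity
  have hstep2 : u * β ^ 2 * (a * b * c) * m ^ 2 = β ^ 2 * (a * b) * c ^ 2 := by
    rw [hc]; ring
  have hstep3 : β ^ 2 * (a * b) * c ^ 2 ≤ 2 * m ^ 2 * N * c ^ 2 :=
    mul_le_mul_of_nonneg_right hNpos (sq_nonneg c)
  have hN0 : 0 ≤ 2 * m ^ 2 * N := le_trans (by positivity) hNpos
  have hstep4 : 2 * m ^ 2 * N * c ^ 2 ≤ 2 * m ^ 2 * N * A ^ 2 := by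
    apply mul_le_mul_of_nonneg_left _ hN0
    nlinarith [hc0, hcA]
  have hfin : u * β ^ 2 * (a * b * c) * m ^ 2 ≤ A ^ 2 * (b * c + a * c - 2 * (a * b)) * m ^ 2 := by
    rw [hstep2, hbcN]
    calc β ^ 2 * (a * b) * c ^ 2 ≤ 2 * m ^ 2 * N * c ^ 2 := hstep3
      _ ≤ 2 * m ^ 2 * N * A ^ 2 := hstep4
      _ = A ^ 2 * (2 * N) * m ^ 2 := by ring
  exact le_of_mul_le_mul_right hfin hm2


lemma msqrt : Measurable Real.sqrt := Real.continuous_sqrt.measurable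

lemma sqrt_le_one_add (t : ℝ) (ht : 0 ≤ t) : Real.sqrt t ≤ 1 + t := by
  nlinarith [Real.sq_sqrt ht, Real.sqrt_nonneg t]

lemma setint_one (p : ℤ × ℤ) : ∫ _x in dyad p, (1:ℝ) = dLen p := by
  simp [setIntegral_const, measureReal_def, volume_dyad, ENNReal.toReal_ofReal (dLen_pos p).le]

section W
variable {w : ℝ → ℝ}

lemma w_aem (hwi : LocallyIntegrable w volume) : AEMeasurable w volume :=
  hwi.aestronglyMeasurable.aemeasurable

lemma g_aesm (hwi : LocallyIntegrable w volume) (p : ℤ × ℤ) :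
    AEStronglyMeasurable (fun x => (Real.sqrt (w x))⁻¹) (volume.restrict (dyad p)) :=
  (((msqrt.inv).comp_aemeasurable (w_aem hwi)).aestronglyMeasurable).restrict

lemma g_sq (hw : ∀ x, 0 < w x) (x : ℝ) : ((Real.sqrt (w x))⁻¹) ^ 2 = (w x)⁻¹ := by
  rw [inv_pow, Real.sq_sqrt (hw x).le]

lemma integrableOn_bound {f h : ℝ → ℝ} (p : ℤ × ℤ)
    (hm : AEStronglyMeasurable f (volume.restrict (dyad p)))
    (hi : IntegrableOn h (dyad p) volume)
    (hb : ∀ x, 0 ≤ f x) (hb2 : ∀ x, f x ≤ h x) : IntegrableOn f (dyad p) volume := by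
  apply Integrable.mono' hi hm
  apply Filter.Eventually.of_forall
  intro x
  rw [Real.norm_eq_abs, abs_of_nonneg (hb x)]
  exact hb2 x

lemma integrableOn_two_add (p : ℤ × ℤ) {f : ℝ → ℝ} (hf : LocallyIntegrable f volume) :
    IntegrableOn (fun x => 2 + f x) (dyad p) volume := by
  exact (integrableOn_const (volume_dyad_lt_top p).ne).add (integrableOn_dyad hf p)

lemma integrableOn_g (hw : ∀ x, 0 < w x) (hwi : LocallyIntegrable w volume)
    (hsi : LocallyIntegrable (fun x => (w x)⁻¹) volume) (p : ℤ × ℤ) :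
    IntegrableOn (fun x => (Real.sqrt (w x))⁻¹) (dyad p) volume := by
  apply integrableOn_bound p (g_aesm hwi p) (integrableOn_two_add p hsi)
  · intro x; exact inv_nonneg.2 (Real.sqrt_nonneg _)
  · intro x
    have h := sqrt_le_one_add (w x)⁻¹ (inv_nonneg.2 (hw x).le)
    rw [Real.sqrt_inv] at h
    nlinarith [(hw x).le]

lemma sqrtw_aesm (hwi : LocallyIntegrable w volume) (p : ℤ × ℤ) :
    AEStronglyMeasurable (fun x => Real.sqrt (w x)) (volume.restrict (dyad p)) :=
  ((msqrt.comp_aemeasurable (w_aem hwi)).aestronglyMeasurable).restrict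

lemma integrableOn_sqrt_w (hw : ∀ x, 0 < w x) (hwi : LocallyIntegrable w volume) (p : ℤ × ℤ) :
    IntegrableOn (fun x => Real.sqrt (w x)) (dyad p) volume := by
  apply integrableOn_bound p (sqrtw_aesm hwi p) (integrableOn_two_add p hwi)
  · intro x; exact Real.sqrt_nonneg _
  · intro x; nlinarith [sqrt_le_one_add (w x) (hw x).le]

/-- m² ≤ v : Cauchy-Schwarz. -/
lemma avg_g_sq_le (hw : ∀ x, 0 < w x) (hwi : LocallyIntegrable w volume)
    (hsi : LocallyIntegrable (fun x => (w x)⁻¹) volume) (p : ℤ × ℤ) :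
    (avg (fun x => (Real.sqrt (w x))⁻¹) p) ^ 2 ≤ avg (fun x => (w x)⁻¹) p := by
  have hL := dLen_pos p
  have h := cs_sq (μ := volume.restrict (dyad p))
    (f := fun x => (Real.sqrt (w x))⁻¹) (g := fun _ => (1:ℝ))
    (Filter.Eventually.of_forall fun x => by positivity)
    (Filter.Eventually.of_forall fun _ => one_pos.le)
    (g_aesm hwi p) aestronglyMeasurable_const
    (by
      have : (fun x => ((Real.sqrt (w x))⁻¹) ^ 2) = fun x => (w x)⁻¹ := by
        funext x; exact g_sq hw x
      rw [this]; exact integrableOn_dyad hsi p)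
    (by
      have h1 : IntegrableOn (fun _ => (1:ℝ)) (dyad p) volume :=
        integrableOn_const (volume_dyad_lt_top p).ne
      simpa only [one_pow, IntegrableOn] using h1)
  simp only [mul_one, one_pow] at h
  rw [setint_one p] at h
  have hgs : ∫ x in dyad p, ((Real.sqrt (w x))⁻¹) ^ 2 = ∫ x in dyad p, (w x)⁻¹ := by
    apply setIntegral_congr_fun (measurableSet_dyad p)
    intro x _; exact g_sq hw x
  rw [hgs] at h
  unfold avg
  rw [mul_pow]
  calc ((dLen p)⁻¹) ^ 2 * (∫ x in dyad p, (Real.sqrt (w x))⁻¹) ^ 2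
      ≤ ((dLen p)⁻¹) ^ 2 * ((∫ x in dyad p, (w x)⁻¹) * dLen p) := by
        apply mul_le_mul_of_nonneg_left h (by positivity)
    _ = (dLen p)⁻¹ * ∫ x in dyad p, (w x)⁻¹ := by
        field_simp
  
/-- 1 ≤ u·m² : two Cauchy-Schwarz applications. -/
lemma one_le_avg_w_avg_g_sq (hw : ∀ x, 0 < w x) (hwi : LocallyIntegrable w volume)
    (hsi : LocallyIntegrable (fun x => (w x)⁻¹) volume) (p : ℤ × ℤ) :
    1 ≤ avg w p * (avg (fun x => (Real.sqrt (w x))⁻¹) p) ^ 2 := by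
  have hL := dLen_pos p
  set r : ℝ → ℝ := fun x => Real.sqrt (Real.sqrt (w x)) with hr
  set rI : ℝ → ℝ := fun x => Real.sqrt ((Real.sqrt (w x))⁻¹) with hrI
  have hr_sq : ∀ x, r x ^ 2 = Real.sqrt (w x) := fun x =>
    Real.sq_sqrt (Real.sqrt_nonneg _)
  have hrI_sq : ∀ x, rI x ^ 2 = (Real.sqrt (w x))⁻¹ := fun x =>
    Real.sq_sqrt (by positivity)
  have hmul : ∀ x, r x * rI x = 1 := by
    intro x
    rw [hr, hrI]
    simp only
    rw [← Real.sqrt_mul (Real.sqrt_nonneg _), mul_inv_cancel₀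
      (Real.sqrt_ne_zero'.2 (hw x)), Real.sqrt_one]
  -- step A
  have hA := cs_sq (μ := volume.restrict (dyad p)) (f := r) (g := rI)
    (Filter.Eventually.of_forall fun x => Real.sqrt_nonneg _)
    (Filter.Eventually.of_forall fun x => Real.sqrt_nonneg _)
    (by
      have : AEStronglyMeasurable (fun x => Real.sqrt (Real.sqrt (w x)))
          (volume.restrict (dyad p)) :=
        (((msqrt.comp msqrt).comp_aemeasurable (w_aem hwi)).aestronglyMeasurable).restrict
      rw [hr]; exact this)
    (by
      have : AEStronglyMeasurable (fun x => Real.sqrt ((Real.sqrt (w x))⁻¹))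
          (volume.restrict (dyad p)) :=
        (((msqrt.comp msqrt.inv).comp_aemeasurable (w_aem hwi)).aestronglyMeasurable).restrict
      rw [hrI]; exact this)
    (by
      have : (fun x => r x ^ 2) = fun x => Real.sqrt (w x) := funext hr_sq
      rw [this]; exact integrableOn_sqrt_w hw hwi p)
    (by
      have : (fun x => rI x ^ 2) = fun x => (Real.sqrt (w x))⁻¹ := funext hrI_sq
      rw [this]; exact integrableOn_g hw hwi hsi p)
  have hmul' : ∫ x in dyad p, r x * rI x = dLen p := by
    have : (fun x => r x * rI x) = fun _ => (1:ℝ) := funext hmul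
    rw [this, setint_one p]
  rw [hmul'] at hA
  have hrs : ∫ x in dyad p, r x ^ 2 = ∫ x in dyad p, Real.sqrt (w x) := by
    apply setIntegral_congr_fun (measurableSet_dyad p); intro x _; exact hr_sq x
  have hrIs : ∫ x in dyad p, rI x ^ 2 = ∫ x in dyad p, (Real.sqrt (w x))⁻¹ := by
    apply setIntegral_congr_fun (measurableSet_dyad p); intro x _; exact hrI_sq x
  rw [hrs, hrIs] at hA
  -- step B
  have hB := cs_sq (μ := volume.restrict (dyad p)) (f := fun x => Real.sqrt (w x))
    (g := fun _ => (1:ℝ))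
    (Filter.Eventually.of_forall fun x => Real.sqrt_nonneg _)
    (Filter.Eventually.of_forall fun _ => one_pos.le)
    (sqrtw_aesm hwi p)
    aestronglyMeasurable_const
    (by
      have : (fun x => Real.sqrt (w x) ^ 2) = fun x => w x := by
        funext x; exact Real.sq_sqrt (hw x).le
      rw [this]; exact integrableOn_dyad hwi p)
    (by
      have h1 : IntegrableOn (fun _ => (1:ℝ)) (dyad p) volume :=
        integrableOn_const (volume_dyad_lt_top p).ne
      simpa only [one_pow, IntegrableOn] using h1)
  simp only [mul_one, one_pow] at hB
  rw [setint_one p] at hB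
  have hws : ∫ x in dyad p, Real.sqrt (w x) ^ 2 = ∫ x in dyad p, w x := by
    apply setIntegral_congr_fun (measurableSet_dyad p)
    intro x _; exact Real.sq_sqrt (hw x).le
  rw [hws] at hB
  -- combine
  set L : ℝ := dLen p
  set X : ℝ := ∫ x in dyad p, Real.sqrt (w x)
  set Y : ℝ := ∫ x in dyad p, (Real.sqrt (w x))⁻¹
  set W : ℝ := ∫ x in dyad p, w x
  have hY0 : 0 ≤ Y := setIntegral_nonneg (measurableSet_dyad p) fun x _ => by positivity
  have hX0 : 0 ≤ X := setIntegral_nonneg (measurableSet_dyad p) fun x _ => Real.sqrt_nonneg _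
  have hW0 : 0 ≤ W := setIntegral_nonneg (measurableSet_dyad p) fun x _ => (hw x).le
  -- L^2 ≤ X * Y, X^2 ≤ W * L  ⟹  L^3 ≤ W * Y^2
  have h3 : L ^ 3 ≤ W * Y ^ 2 := by nlinarith [hA, hB, dLen_pos p]
  show 1 ≤ L⁻¹ * W * (L⁻¹ * Y) ^ 2
  have h4 := mul_le_mul_of_nonneg_right h3 (le_of_lt (by positivity : (0:ℝ) < (L⁻¹) ^ 3))
  have h5 : L ^ 3 * (L⁻¹) ^ 3 = 1 := by
    field_simp
  calc (1:ℝ) = L ^ 3 * (L⁻¹) ^ 3 := h5.symm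
    _ ≤ W * Y ^ 2 * (L⁻¹) ^ 3 := h4
    _ = L⁻¹ * W * (L⁻¹ * Y) ^ 2 := by ring

end W

lemma locInt_g {w : ℝ → ℝ} (hw : ∀ x, 0 < w x) (hwi : LocallyIntegrable w volume)
    (hsi : LocallyIntegrable (fun x => (w x)⁻¹) volume) :
    LocallyIntegrable (fun x => (Real.sqrt (w x))⁻¹) volume := by
  rw [locallyIntegrable_iff]
  intro k hk
  apply Integrable.mono'
    (((integrableOn_const hk.measure_lt_top.ne).add
      (hsi.integrableOn_isCompact hk)) :
        IntegrableOn (fun x => (2:ℝ) + (w x)⁻¹) k volume)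
    (by
      have h : AEStronglyMeasurable (fun x => (Real.sqrt (w x))⁻¹) (volume.restrict k) :=
        (((msqrt.inv).comp_aemeasurable (w_aem hwi)).aestronglyMeasurable).restrict
      exact h)
  apply Filter.Eventually.of_forall
  intro x
  rw [Real.norm_eq_abs, abs_of_nonneg (inv_nonneg.2 (Real.sqrt_nonneg _))]
  have h := sqrt_le_one_add (w x)⁻¹ (inv_nonneg.2 (hw x).le)
  rw [Real.sqrt_inv] at h
  simp only [Pi.add_apply]
  nlinarith [(hw x).le]

section Node
variable {w : ℝ → ℝ} (hw : ∀ x, 0 < w x) (hwi : LocallyIntegrable w volume)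
  (hsi : LocallyIntegrable (fun x => (w x)⁻¹) volume) {A : ℝ}
  (hA : ∀ p : ℤ × ℤ, avg w p * avg (fun x => (w x)⁻¹) p ≤ A)
set_option linter.unusedSectionVars false
include hw hwi hsi hA

/-- The per-node Bellman defect inequality, in terms of averages. -/
lemma node_defect (q : ℤ × ℤ) :
    dLen q * (avg w q *
        ((avg (fun x => (Real.sqrt (w x))⁻¹) (dLeft q) -
          avg (fun x => (Real.sqrt (w x))⁻¹) (dRight q)) / 2) ^ 2) ≤
      dLen q * (2 * A ^ 2 -
          2 * A ^ 2 * (avg w q * (avg (fun x => (Real.sqrt (w x))⁻¹) q) ^ 2)⁻¹) -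
        (dLen (dLeft q) * (2 * A ^ 2 - 2 * A ^ 2 *
            (avg w (dLeft q) * (avg (fun x => (Real.sqrt (w x))⁻¹) (dLeft q)) ^ 2)⁻¹) +
          dLen (dRight q) * (2 * A ^ 2 - 2 * A ^ 2 *
            (avg w (dRight q) * (avg (fun x => (Real.sqrt (w x))⁻¹) (dRight q)) ^ 2)⁻¹)) := by
  have hgpos : ∀ x, 0 < (Real.sqrt (w x))⁻¹ := fun x =>
    inv_pos.2 (Real.sqrt_pos.2 (hw x))
  have hgi := locInt_g hw hwi hsi
  have hUm := avg_mid hwi q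
  have hMm := avg_mid hgi q
  have hcA : avg w q * (avg (fun x => (Real.sqrt (w x))⁻¹) q) ^ 2 ≤ A := by
    have h1 := avg_g_sq_le hw hwi hsi q
    have h2 := (avg_pos hw hwi q).le
    calc avg w q * (avg (fun x => (Real.sqrt (w x))⁻¹) q) ^ 2
        ≤ avg w q * avg (fun x => (w x)⁻¹) q := mul_le_mul_of_nonneg_left h1 h2
      _ ≤ A := hA q
  rw [hUm, hMm] at hcA
  have hb := bellman_defect (avg_pos hw hwi (dLeft q)) (avg_pos hw hwi (dRight q))
    (avg_pos hgpos hgi (dLeft q)) (avg_pos hgpos hgi (dRight q)) hcA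
  rw [← hUm, ← hMm] at hb
  have hlen : dLen (dLeft q) = dLen q / 2 := dLen_dLeft q
  have hlen2 : dLen (dRight q) = dLen q / 2 := dLen_dRight q
  rw [hlen, hlen2]
  have hL0 := (dLen_pos q).le
  nlinarith [mul_le_mul_of_nonneg_left hb hL0]

lemma node_one_le (q : ℤ × ℤ) :
    1 ≤ avg w q * (avg (fun x => (Real.sqrt (w x))⁻¹) q) ^ 2 :=
  one_le_avg_w_avg_g_sq hw hwi hsi q

lemma node_Bel_nonneg (q : ℤ × ℤ) :
    0 ≤ 2 * A ^ 2 - 2 * A ^ 2 * (avg w q * (avg (fun x => (Real.sqrt (w x))⁻¹) q) ^ 2)⁻¹ := by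
  have h1 := node_one_le hw hwi hsi hA q
  have hc0 : 0 < avg w q * (avg (fun x => (Real.sqrt (w x))⁻¹) q) ^ 2 := lt_of_lt_of_le one_pos h1
  have hinv : (avg w q * (avg (fun x => (Real.sqrt (w x))⁻¹) q) ^ 2)⁻¹ ≤ 1 :=
    inv_le_one_of_one_le₀ h1
  nlinarith [sq_nonneg A]

lemma node_Bel_le (q : ℤ × ℤ) :
    2 * A ^ 2 - 2 * A ^ 2 * (avg w q * (avg (fun x => (Real.sqrt (w x))⁻¹) q) ^ 2)⁻¹ ≤
      2 * A ^ 2 := by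
  have h1 := node_one_le hw hwi hsi hA q
  have hc0 : 0 < avg w q * (avg (fun x => (Real.sqrt (w x))⁻¹) q) ^ 2 := lt_of_lt_of_le one_pos h1
  have := inv_pos.2 hc0
  nlinarith [sq_nonneg A]

lemma term_eq (q : ℤ × ℤ) :
    (hc (fun x => (Real.sqrt (w x))⁻¹) q) ^ 2 * avg w q =
      dLen q * (avg w q *
        ((avg (fun x => (Real.sqrt (w x))⁻¹) (dLeft q) -
          avg (fun x => (Real.sqrt (w x))⁻¹) (dRight q)) / 2) ^ 2) := by
  rw [hc_sq (locInt_g hw hwi hsi) q]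
  ring

end Node

lemma telescope (p : ℤ × ℤ) (φ : ℤ × ℤ → ℝ) (n : ℕ) :
    ∑ k ∈ Finset.range n, ∑ q ∈ chl p k, (φ q - (φ (dLeft q) + φ (dRight q)))
      = φ p - ∑ q ∈ chl p n, φ q := by
  induction n with
  | zero => simp [chl]
  | succ n ih =>
    rw [Finset.sum_range_succ, ih, chl_sum_succ p n φ, Finset.sum_sub_distrib]
    ring

lemma chl_disjoint (p : ℤ × ℤ) {k l : ℕ} (h : k ≠ l) : Disjoint (chl p k) (chl p l) := by
  rw [Finset.disjoint_left]
  intro x hk hl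
  have h1 := chl_fst p k x hk
  have h2 := chl_fst p l x hl
  omega


end S6

/-- `Σ_{J⊆I} ⟨w^{-1/2},h_J⟩² ⟨w⟩_J ≲ [w]²_{A₂} |I|`. -/
theorem statement6 :
    ∃ C : ℝ, 0 < C ∧ ∀ (w : ℝ → ℝ), (∀ x, 0 < w x) →
      LocallyIntegrable w volume → LocallyIntegrable (fun x => (w x)⁻¹) volume →
      ∀ A : ℝ, (∀ p : ℤ × ℤ, avg w p * avg (fun x => (w x)⁻¹) p ≤ A) →
      ∀ p : ℤ × ℤ, ∀ F : Finset (ℤ × ℤ), (∀ q ∈ F, dyad q ⊆ dyad p) →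
        ∑ q ∈ F, (hc (fun x => (Real.sqrt (w x))⁻¹) q) ^ 2 * avg w q ≤
          C * A ^ 2 * dLen p := by
  refine ⟨2, by norm_num, ?_⟩
  intro w hw hwi hsi A hA p F hF
  classical
  set G : ℝ → ℝ := fun x => (Real.sqrt (w x))⁻¹ with hG
  set B : ℤ × ℤ → ℝ :=
    fun q => dLen q * (2 * A ^ 2 - 2 * A ^ 2 * (avg w q * (avg G q) ^ 2)⁻¹) with hB
  have hterm_nonneg : ∀ q : ℤ × ℤ, 0 ≤ hc G q ^ 2 * avg w q := fun q =>
    mul_nonneg (sq_nonneg _) (S6.avg_nonneg (fun x => (hw x).le) q)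
  have hB_nonneg : ∀ q, 0 ≤ B q := fun q =>
    mul_nonneg (S6.dLen_pos q).le (S6.node_Bel_nonneg hw hwi hsi hA q)
  have hdef : ∀ q, hc G q ^ 2 * avg w q ≤ B q - (B (dLeft q) + B (dRight q)) := by
    intro q
    calc hc G q ^ 2 * avg w q
        = dLen q * (avg w q * ((avg G (dLeft q) - avg G (dRight q)) / 2) ^ 2) :=
          S6.term_eq hw hwi hsi hA q
      _ ≤ B q - (B (dLeft q) + B (dRight q)) := S6.node_defect hw hwi hsi hA q
  set n : ℕ := (F.sup fun q => (p.1 - q.1).toNat) + 1 with hn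
  set T : Finset (ℤ × ℤ) := (Finset.range n).biUnion (S6.chl p) with hT
  have hFT : F ⊆ T := by
    intro q hq
    have hsub := hF q hq
    have hle := S6.fst_le_of_subset hsub
    have hmem := S6.mem_chl p ((p.1 - q.1).toNat) q hsub (by omega)
    rw [hT]
    apply Finset.mem_biUnion.2
    refine ⟨(p.1 - q.1).toNat, Finset.mem_range.2 ?_, hmem⟩
    have hsup : (p.1 - q.1).toNat ≤ F.sup fun r : ℤ × ℤ => (p.1 - r.1).toNat :=
      Finset.le_sup (f := fun r : ℤ × ℤ => (p.1 - r.1).toNat) hq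
    omega
  have hdisjU : (↑(Finset.range n) : Set ℕ).PairwiseDisjoint (S6.chl p) := by
    intro a _ b _ hab
    exact S6.chl_disjoint p hab
  calc ∑ q ∈ F, hc G q ^ 2 * avg w q
      ≤ ∑ q ∈ T, hc G q ^ 2 * avg w q :=
        Finset.sum_le_sum_of_subset_of_nonneg hFT (fun q _ _ => hterm_nonneg q)
    _ = ∑ k ∈ Finset.range n, ∑ q ∈ S6.chl p k, hc G q ^ 2 * avg w q := by
        rw [hT, Finset.sum_biUnion hdisjU]
    _ ≤ ∑ k ∈ Finset.range n, ∑ q ∈ S6.chl p k, (B q - (B (dLeft q) + B (dRight q))) :=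
        Finset.sum_le_sum fun k _ => Finset.sum_le_sum fun q _ => hdef q
    _ = B p - ∑ q ∈ S6.chl p n, B q := S6.telescope p B n
    _ ≤ B p := by
        have h0 : 0 ≤ ∑ q ∈ S6.chl p n, B q := Finset.sum_nonneg fun q _ => hB_nonneg q
        linarith
    _ ≤ 2 * A ^ 2 * dLen p := by
        rw [hB]
        have h1 := S6.node_Bel_le hw hwi hsi hA (A := A) p
        have h2 := (S6.dLen_pos p).le
        nlinarith
end
end

section
/- Let w ∈ A₂ on ℝ. Then for every dyadic interval I: Σ_{J⊆I} (⟨w^{-1/2}, h_J⟩)² ⟨w⟩_{πJ} ≲ [w]²_{A₂} |I|, where πJ is the dyadic parent of J. -/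
open MeasureTheory Set
open scoped ENNReal

noncomputable section

-- ==== auxiliary development ====

lemma dLen_pos (p : ℤ × ℤ) : 0 < dLen p := zpow_pos (by norm_num) _

lemma dyad_lt (p : ℤ × ℤ) : (p.2 : ℝ) * 2 ^ p.1 < ((p.2 : ℝ) + 1) * 2 ^ p.1 := by
  have := dLen_pos p; unfold dLen at this; nlinarith

lemma dyad_nonempty (p : ℤ × ℤ) : (dyad p).Nonempty :=
  ⟨_, mem_Ico.2 ⟨le_refl _, dyad_lt p⟩⟩

lemma measurableSet_dyad (p : ℤ × ℤ) : MeasurableSet (dyad p) := measurableSet_Ico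

lemma dyad_subset_iff {q p : ℤ × ℤ} :
    dyad q ⊆ dyad p ↔ ((p.2 : ℝ) * 2 ^ p.1 ≤ (q.2 : ℝ) * 2 ^ q.1 ∧
      ((q.2 : ℝ) + 1) * 2 ^ q.1 ≤ ((p.2 : ℝ) + 1) * 2 ^ p.1) := by
  unfold dyad; rw [Set.Ico_subset_Ico_iff (dyad_lt q)]

lemma two_zpow_succ (n : ℤ) : (2:ℝ) ^ n = 2 ^ (n - 1) * 2 := by
  rw [← zpow_add_one₀ (by norm_num : (2:ℝ) ≠ 0)]; ring_nf

lemma half_pos' (p : ℤ × ℤ) : (0:ℝ) < 2 ^ (p.1 - 1) := zpow_pos (by norm_num) _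

lemma dyad_left_def (p : ℤ × ℤ) :
    dyad (dLeft p) = Set.Ico ((p.2 : ℝ) * 2 ^ p.1) ((p.2 : ℝ) * 2 ^ p.1 + 2 ^ (p.1 - 1)) := by
  unfold dyad dLeft
  have h2 : (2:ℝ) ^ p.1 = 2 ^ (p.1 - 1) * 2 := two_zpow_succ p.1
  congr 1 <;> push_cast <;> rw [h2] <;> ring

lemma dyad_right_def (p : ℤ × ℤ) :
    dyad (dRight p) = Set.Ico ((p.2 : ℝ) * 2 ^ p.1 + 2 ^ (p.1 - 1)) (((p.2 : ℝ) + 1) * 2 ^ p.1) := by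
  unfold dyad dRight
  have h2 : (2:ℝ) ^ p.1 = 2 ^ (p.1 - 1) * 2 := two_zpow_succ p.1
  congr 1 <;> push_cast <;> rw [h2] <;> ring

lemma dyad_union (p : ℤ × ℤ) : dyad (dLeft p) ∪ dyad (dRight p) = dyad p := by
  rw [dyad_left_def, dyad_right_def]
  rw [Set.Ico_union_Ico_eq_Ico]
  · rfl
  · nlinarith [half_pos' p]
  · have := dyad_lt p
    have h2 : (2:ℝ) ^ p.1 = 2 ^ (p.1 - 1) * 2 := two_zpow_succ p.1
    nlinarith [half_pos' p]

lemma dyad_disjoint_lr (p : ℤ × ℤ) : Disjoint (dyad (dLeft p)) (dyad (dRight p)) := by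
  rw [dyad_left_def, dyad_right_def]; exact Set.Ico_disjoint_Ico_same

lemma dLeft_subset (p : ℤ × ℤ) : dyad (dLeft p) ⊆ dyad p := by
  rw [← dyad_union p]; exact Set.subset_union_left
lemma dRight_subset (p : ℤ × ℤ) : dyad (dRight p) ⊆ dyad p := by
  rw [← dyad_union p]; exact Set.subset_union_right

lemma dLen_left (p : ℤ × ℤ) : dLen (dLeft p) = dLen p / 2 := by
  unfold dLen dLeft; rw [two_zpow_succ p.1]; ring
lemma dLen_right (p : ℤ × ℤ) : dLen (dRight p) = dLen p / 2 := by
  unfold dLen dRight; rw [two_zpow_succ p.1]; ring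
lemma dLen_parent (p : ℤ × ℤ) : dLen (dParent p) = 2 * dLen p := by
  unfold dLen dParent
  show (2:ℝ) ^ (p.1 + 1) = 2 * 2 ^ p.1
  rw [zpow_add_one₀ (by norm_num : (2:ℝ) ≠ 0)]; ring

lemma fdiv_two_bounds (k : ℤ) : 2 * Int.fdiv k 2 ≤ k ∧ k ≤ 2 * Int.fdiv k 2 + 1 := by
  rw [Int.fdiv_eq_ediv_of_nonneg _ (by norm_num)]
  have h := Int.mul_ediv_add_emod k 2
  rcases Int.emod_two_eq_zero_or_one k with h2 | h2 <;> omega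

lemma subset_parent (p : ℤ × ℤ) : dyad p ⊆ dyad (dParent p) := by
  rw [dyad_subset_iff]
  obtain ⟨h1, h2⟩ := fdiv_two_bounds p.2
  have hp : (0:ℝ) < 2 ^ p.1 := dLen_pos p
  have hcast1 : ((2 * Int.fdiv p.2 2 : ℤ) : ℝ) ≤ (p.2 : ℝ) := by exact_mod_cast h1
  have hcast2 : (p.2 : ℝ) + 1 ≤ ((2 * Int.fdiv p.2 2 + 2 : ℤ) : ℝ) := by
    have : p.2 + 1 ≤ 2 * Int.fdiv p.2 2 + 2 := by omega
    exact_mod_cast this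
  have h2p : (2:ℝ) ^ (p.1 + 1) = 2 ^ p.1 * 2 := by
    rw [zpow_add_one₀ (by norm_num : (2:ℝ) ≠ 0)]
  constructor
  · show ((dParent p).2 : ℝ) * 2 ^ (dParent p).1 ≤ _
    unfold dParent
    push_cast at hcast1 ⊢
    rw [h2p]; nlinarith
  · show _ ≤ (((dParent p).2 : ℝ) + 1) * 2 ^ (dParent p).1
    unfold dParent
    push_cast at hcast2 ⊢
    rw [h2p]; nlinarith

-- scale comparison
lemma scale_le_of_subset {q p : ℤ × ℤ} (h : dyad q ⊆ dyad p) : q.1 ≤ p.1 := by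
  rw [dyad_subset_iff] at h
  have hlen : (2:ℝ) ^ q.1 ≤ 2 ^ p.1 := by nlinarith [h.1, h.2]
  exact_mod_cast (zpow_le_zpow_iff_right₀ (by norm_num : (1:ℝ) < 2)).1 hlen

lemma eq_of_subset_same_scale {q p : ℤ × ℤ} (h : dyad q ⊆ dyad p) (hs : q.1 = p.1) : q = p := by
  rw [dyad_subset_iff, hs] at h
  have hp : (0:ℝ) < 2 ^ p.1 := zpow_pos (by norm_num) _
  have h1 : (p.2 : ℝ) ≤ q.2 := by
    have := h.1; exact le_of_mul_le_mul_right (by nlinarith) hp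
  have h2 : (q.2 : ℝ) ≤ p.2 := by nlinarith [h.2]
  have : q.2 = p.2 := by exact_mod_cast le_antisymm h2 h1
  exact Prod.ext hs this

lemma subset_left_or_right {q p : ℤ × ℤ} (h : dyad q ⊆ dyad p) (hs : q.1 < p.1) :
    dyad q ⊆ dyad (dLeft p) ∨ dyad q ⊆ dyad (dRight p) := by
  -- midpoint c = (2p.2+1)*2^(p.1-1); endpoints of q are multiples of 2^q.1
  set m := q.1
  set e : ℕ := (p.1 - 1 - m).toNat with he
  have hee : (p.1 - 1 - m) = (e : ℤ) := by rw [he]; omega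
  have hsplit : (2:ℝ) ^ (p.1 - 1) = ((2:ℤ)^e : ℤ) * 2 ^ m := by
    push_cast
    rw [← zpow_natCast (2:ℝ) e, ← zpow_add₀ (by norm_num : (2:ℝ) ≠ 0)]
    congr 1; omega
  set M : ℤ := (2 * p.2 + 1) * 2 ^ e with hM
  have hm : (0:ℝ) < 2 ^ m := zpow_pos (by norm_num) _
  -- c in real terms
  have hc : ((2 * p.2 + 1 : ℤ) : ℝ) * 2 ^ (p.1 - 1) = (M : ℝ) * 2 ^ m := by
    rw [hsplit, hM]; push_cast; ring
  rcases le_or_gt M q.2 with hcase | hcase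
  · right
    rw [dyad_subset_iff] at h ⊢
    have hL : ((dRight p).2 : ℝ) * 2 ^ (dRight p).1 ≤ (q.2 : ℝ) * 2 ^ m := by
      show ((2 * p.2 + 1 : ℤ) : ℝ) * 2 ^ (p.1 - 1) ≤ _
      rw [hc]
      have : (M:ℝ) ≤ q.2 := by exact_mod_cast hcase
      nlinarith
    refine ⟨hL, ?_⟩
    show ((q.2:ℝ)+1) * 2 ^ m ≤ (((2 * p.2 + 1 : ℤ) : ℝ) + 1) * 2 ^ (p.1 - 1)
    have h2 := h.2
    have : (((2 * p.2 + 1 : ℤ) : ℝ) + 1) * 2 ^ (p.1 - 1) = ((p.2:ℝ)+1) * 2 ^ p.1 := by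
      have h2p : (2:ℝ) ^ p.1 = 2 ^ (p.1-1) * 2 := by
        rw [← zpow_add_one₀ (by norm_num : (2:ℝ) ≠ 0)]; ring_nf
      push_cast; rw [h2p]; ring
    rw [this]; exact h2
  · left
    rw [dyad_subset_iff] at h ⊢
    constructor
    · show ((dLeft p).2 : ℝ) * 2 ^ (dLeft p).1 ≤ (q.2 : ℝ) * 2 ^ m
      have h1 := h.1
      have : ((dLeft p).2 : ℝ) * 2 ^ (dLeft p).1 = (p.2:ℝ) * 2 ^ p.1 := by
        show ((2 * p.2 : ℤ) : ℝ) * 2 ^ (p.1 - 1) = _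
        have h2p : (2:ℝ) ^ p.1 = 2 ^ (p.1-1) * 2 := by
          rw [← zpow_add_one₀ (by norm_num : (2:ℝ) ≠ 0)]; ring_nf
        push_cast; rw [h2p]; ring
      rw [this]; exact h1
    · show ((q.2:ℝ)+1) * 2 ^ m ≤ (((dLeft p).2 : ℝ) + 1) * 2 ^ (dLeft p).1
      have hq1 : q.2 + 1 ≤ M := hcase
      have : (((dLeft p).2 : ℝ) + 1) * 2 ^ (dLeft p).1 = ((2 * p.2 + 1 : ℤ) : ℝ) * 2 ^ (p.1 - 1) := by
        simp only [dLeft]; push_cast; ring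
      rw [this, hc]
      have : ((q.2:ℝ)+1) ≤ (M:ℝ) := by exact_mod_cast hq1
      nlinarith

-- trees
def tree : ℕ → ℤ × ℤ → Finset (ℤ × ℤ)
  | 0, K => {K}
  | (n+1), K => insert K (tree n (dLeft K) ∪ tree n (dRight K))

lemma self_mem_tree (n : ℕ) (K : ℤ × ℤ) : K ∈ tree n K := by
  cases n with
  | zero => simp [tree]
  | succ n => simp [tree]

lemma subset_of_mem_tree {n : ℕ} {J K : ℤ × ℤ} (h : J ∈ tree n K) : dyad J ⊆ dyad K := by
  induction n generalizing J K with
  | zero => simp [tree] at h; subst h; exact subset_rfl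
  | succ n ih =>
    simp [tree] at h
    rcases h with h | h | h
    · subst h; exact subset_rfl
    · exact (ih h).trans (dLeft_subset K)
    · exact (ih h).trans (dRight_subset K)

lemma tree_succ_def (n : ℕ) (K : ℤ × ℤ) :
    tree (n+1) K = insert K (tree n (dLeft K) ∪ tree n (dRight K)) := rfl

lemma tree_mono_succ (n : ℕ) (K : ℤ × ℤ) : tree n K ⊆ tree (n+1) K := by
  induction n generalizing K with
  | zero => intro x hx; simp [tree] at hx ⊢; tauto
  | succ n ih =>
    intro x hx
    rw [tree_succ_def] at hx
    rw [tree_succ_def]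
    simp only [Finset.mem_insert, Finset.mem_union] at hx ⊢
    rcases hx with h | h | h
    · tauto
    · exact Or.inr (Or.inl (ih _ h))
    · exact Or.inr (Or.inr (ih _ h))

lemma tree_mono {n N : ℕ} (h : n ≤ N) (K : ℤ × ℤ) : tree n K ⊆ tree N K := by
  induction N with
  | zero => have : n = 0 := by omega
            subst this; exact subset_rfl
  | succ N ih =>
    rcases Nat.lt_or_ge n (N+1) with h2 | h2
    · exact (ih (by omega)).trans (tree_mono_succ N K)
    · have : n = N + 1 := by omega
      subst this; exact subset_rfl

lemma mem_tree_of_subset {q p : ℤ × ℤ} (n : ℕ) (h : dyad q ⊆ dyad p) (hs : q.1 + n = p.1) :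
    q ∈ tree n p := by
  induction n generalizing p with
  | zero =>
    have : q = p := eq_of_subset_same_scale h (by omega)
    subst this; exact self_mem_tree 0 q
  | succ n ih =>
    have hlt : q.1 < p.1 := by omega
    rcases subset_left_or_right h hlt with hcase | hcase
    · have : q ∈ tree n (dLeft p) := ih hcase (by show q.1 + n = p.1 - 1; omega)
      simp only [tree, Finset.mem_insert, Finset.mem_union]; tauto
    · have : q ∈ tree n (dRight p) := ih hcase (by show q.1 + n = p.1 - 1; omega)
      simp only [tree, Finset.mem_insert, Finset.mem_union]; tauto

lemma mem_tree_sup {p : ℤ × ℤ} {F : Finset (ℤ × ℤ)} (hF : ∀ q ∈ F, dyad q ⊆ dyad p)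
    {q : ℤ × ℤ} (hq : q ∈ F) : q ∈ tree (F.sup fun r => (p.1 - r.1).toNat) p := by
  set N := F.sup fun r => (p.1 - r.1).toNat
  have h1 : q.1 ≤ p.1 := scale_le_of_subset (hF q hq)
  have h2 : (p.1 - q.1).toNat ≤ N := Finset.le_sup (f := fun r => (p.1 - r.1).toNat) hq
  have h3 : q ∈ tree (p.1 - q.1).toNat p := mem_tree_of_subset _ (hF q hq) (by omega)
  exact tree_mono h2 p h3

-- disjointness for sum splitting
lemma not_mem_tree_of_scale {J K : ℤ × ℤ} {n : ℕ} (h : K.1 < J.1) : J ∉ tree n K := by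
  intro hmem
  have := scale_le_of_subset (subset_of_mem_tree hmem)
  omega

lemma tree_sum_succ {M : Type*} [AddCommMonoid M] (f : (ℤ × ℤ) → M) (n : ℕ) (K : ℤ × ℤ) :
    ∑ J ∈ tree (n+1) K, f J = f K + (∑ J ∈ tree n (dLeft K), f J) + ∑ J ∈ tree n (dRight K), f J := by
  have hKL : K ∉ tree n (dLeft K) := not_mem_tree_of_scale (by show K.1 - 1 < K.1; omega)
  have hKR : K ∉ tree n (dRight K) := not_mem_tree_of_scale (by show K.1 - 1 < K.1; omega)
  have hLR : Disjoint (tree n (dLeft K)) (tree n (dRight K)) := by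
    rw [Finset.disjoint_left]
    intro J hJL hJR
    have h1 := subset_of_mem_tree hJL
    have h2 := subset_of_mem_tree hJR
    obtain ⟨x, hx⟩ := dyad_nonempty J
    exact (dyad_disjoint_lr K).le_bot ⟨h1 hx, h2 hx⟩
  show ∑ J ∈ insert K (tree n (dLeft K) ∪ tree n (dRight K)), f J = _
  rw [Finset.sum_insert (by simp [hKL, hKR]), Finset.sum_union hLR]
  abel


-- Cauchy-Schwarz helper
lemma cs_helper {μ : Measure ℝ} {f g : ℝ → ℝ}
    (hf2 : Integrable (fun x => f x * f x) μ) (hg2 : Integrable (fun x => g x * g x) μ)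
    (hfg : Integrable (fun x => f x * g x) μ) :
    (∫ x, f x * g x ∂μ) ^ 2 ≤ (∫ x, f x * f x ∂μ) * ∫ x, g x * g x ∂μ := by
  set P := ∫ x, f x * f x ∂μ
  set Q := ∫ x, g x * g x ∂μ
  set T := ∫ x, f x * g x ∂μ
  have hQ0 : 0 ≤ Q := integral_nonneg fun x => mul_self_nonneg _
  have hP0 : 0 ≤ P := integral_nonneg fun x => mul_self_nonneg _
  rcases eq_or_lt_of_le hQ0 with hQ | hQ
  · -- Q = 0 ⇒ g = 0 a.e. ⇒ T = 0
    have hg0 : (fun x => g x * g x) =ᶠ[ae μ] 0 :=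
      (integral_eq_zero_iff_of_nonneg (fun x => mul_self_nonneg _) hg2).1 hQ.symm
    have hfg0 : (fun x => f x * g x) =ᶠ[ae μ] 0 := by
      filter_upwards [hg0] with x hx
      have : g x = 0 := by
        have := hx; simp only [Pi.zero_apply] at this; nlinarith
      simp [this]
    have : T = 0 := by
      rw [show T = ∫ x, f x * g x ∂μ from rfl, integral_congr_ae hfg0]
      simp
    rw [this, ← hQ]; nlinarith
  · have key : 0 ≤ ∫ x, (Q * f x - T * g x) ^ 2 ∂μ := integral_nonneg fun x => sq_nonneg _
    have expand : (fun x => (Q * f x - T * g x) ^ 2) =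
        fun x => Q ^ 2 * (f x * f x) - (2 * Q * T) * (f x * g x) + T ^ 2 * (g x * g x) := by
      funext x; ring
    rw [expand] at key
    have h1 : Integrable (fun x => Q ^ 2 * (f x * f x) - (2 * Q * T) * (f x * g x)) μ :=
      (hf2.const_mul _).sub (hfg.const_mul _)
    have h2 : Integrable (fun x => T ^ 2 * (g x * g x)) μ := hg2.const_mul _
    rw [integral_add h1 h2, integral_sub (hf2.const_mul _) (hfg.const_mul _),
        integral_const_mul, integral_const_mul, integral_const_mul] at key
    have : 0 ≤ Q * (P * Q - T ^ 2) := by nlinarith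
    nlinarith

lemma integral_pos_on {s : Set ℝ} {f : ℝ → ℝ} (hs : MeasurableSet s) (hμ : 0 < volume s)
    (hf : ∀ x, 0 < f x) (hi : IntegrableOn f s volume) : 0 < ∫ x in s, f x := by
  rw [setIntegral_pos_iff_support_of_nonneg_ae
      (Filter.Eventually.of_forall fun x => (hf x).le) hi]
  have : Function.support f = univ := by
    ext x; simp [Function.support, (hf x).ne']
  rw [this, Set.univ_inter]; exact hμ

-- volume of dyad
lemma volume_dyad (p : ℤ × ℤ) : volume (dyad p) = ENNReal.ofReal (dLen p) := by
  unfold dyad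
  rw [Real.volume_Ico]
  congr 1
  unfold dLen; ring

lemma volume_dyad_pos (p : ℤ × ℤ) : 0 < volume (dyad p) := by
  rw [volume_dyad]; exact ENNReal.ofReal_pos.2 (dLen_pos p)

lemma volume_dyad_fin (p : ℤ × ℤ) : volume (dyad p) ≠ ⊤ := by
  rw [volume_dyad]; exact ENNReal.ofReal_ne_top

lemma dyad_bounded (p : ℤ × ℤ) : dyad p ⊆ Icc ((p.2 : ℝ) * 2 ^ p.1) (((p.2 : ℝ) + 1) * 2 ^ p.1) :=
  Set.Ico_subset_Icc_self

section W
variable {w : ℝ → ℝ} (hw : ∀ x, 0 < w x)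
  (hwi : LocallyIntegrable w volume)
  (hsi : LocallyIntegrable (fun x => (w x)⁻¹) volume)

def Wf (w : ℝ → ℝ) (q : ℤ × ℤ) : ℝ := ∫ x in dyad q, w x
def Sf (w : ℝ → ℝ) (q : ℤ × ℤ) : ℝ := ∫ x in dyad q, (w x)⁻¹
def Rf (w : ℝ → ℝ) (q : ℤ × ℤ) : ℝ := ∫ x in dyad q, (Real.sqrt (w x))⁻¹
def zf (w : ℝ → ℝ) (q : ℤ × ℤ) : ℝ := (dLen q)⁻¹ * Wf w q

include hwi in
lemma intW (q : ℤ × ℤ) : IntegrableOn w (dyad q) volume :=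
  (hwi.integrableOn_isCompact isCompact_Icc).mono_set (dyad_bounded q)

include hsi in
lemma intS (q : ℤ × ℤ) : IntegrableOn (fun x => (w x)⁻¹) (dyad q) volume :=
  (hsi.integrableOn_isCompact isCompact_Icc).mono_set (dyad_bounded q)

lemma sqrt_inv_le (t : ℝ) (ht : 0 < t) : (Real.sqrt t)⁻¹ ≤ 1 + t⁻¹ := by
  have hs : 0 < Real.sqrt t := Real.sqrt_pos.2 ht
  have hsq : Real.sqrt t * Real.sqrt t = t := Real.mul_self_sqrt ht.le
  have h1 : (Real.sqrt t)⁻¹ = Real.sqrt t / t := by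
    rw [eq_div_iff ht.ne']
    nlinarith [mul_inv_cancel₀ hs.ne']
  rw [h1, div_le_iff₀ ht]
  nlinarith [sq_nonneg (Real.sqrt t - 1), mul_inv_cancel₀ ht.ne']

include hw hwi hsi in
lemma measR : AEStronglyMeasurable (fun x => (Real.sqrt (w x))⁻¹) volume := by
  have hm : AEMeasurable w volume := hwi.aestronglyMeasurable.aemeasurable
  exact (((Real.continuous_sqrt.measurable).inv).comp_aemeasurable hm).aestronglyMeasurable

include hw hwi hsi in
lemma intR (q : ℤ × ℤ) : IntegrableOn (fun x => (Real.sqrt (w x))⁻¹) (dyad q) volume := by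
  apply Integrable.mono' ((integrableOn_const (C := (1:ℝ)) (volume_dyad_fin q)).add (intS hsi q))
  · exact (measR hw hwi hsi).restrict
  · refine Filter.Eventually.of_forall fun x => ?_
    have := sqrt_inv_le (w x) (hw x)
    rw [Real.norm_eq_abs, abs_of_nonneg (by positivity)]
    simpa using this

include hw hwi in
lemma Wf_pos (q : ℤ × ℤ) : 0 < Wf w q :=
  integral_pos_on (measurableSet_dyad q) (volume_dyad_pos q) hw (intW hwi q)

include hw hsi in
lemma Sf_pos (q : ℤ × ℤ) : 0 < Sf w q :=
  integral_pos_on (measurableSet_dyad q) (volume_dyad_pos q) (fun x => inv_pos.2 (hw x)) (intS hsi q)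

include hw hwi hsi in
lemma Rf_pos (q : ℤ × ℤ) : 0 < Rf w q :=
  integral_pos_on (measurableSet_dyad q) (volume_dyad_pos q)
    (fun x => inv_pos.2 (Real.sqrt_pos.2 (hw x))) (intR hw hwi hsi q)

-- additivity
lemma add_split {f : ℝ → ℝ} (hf : ∀ q : ℤ × ℤ, IntegrableOn f (dyad q) volume) (q : ℤ × ℤ) :
    ∫ x in dyad q, f x = (∫ x in dyad (dLeft q), f x) + ∫ x in dyad (dRight q), f x := by
  rw [← dyad_union q, setIntegral_union (dyad_disjoint_lr q) (measurableSet_dyad _) (hf _) (hf _)]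

include hwi in
lemma Wf_add (q : ℤ × ℤ) : Wf w q = Wf w (dLeft q) + Wf w (dRight q) :=
  add_split (fun r => intW hwi r) q
include hsi in
lemma Sf_add (q : ℤ × ℤ) : Sf w q = Sf w (dLeft q) + Sf w (dRight q) :=
  add_split (fun r => intS hsi r) q
include hw hwi hsi in
lemma Rf_add (q : ℤ × ℤ) : Rf w q = Rf w (dLeft q) + Rf w (dRight q) :=
  add_split (fun r => intR hw hwi hsi r) q

include hw hsi in
lemma Sf_mono_parent (q : ℤ × ℤ) : Sf w q ≤ Sf w (dParent q) := by
  apply setIntegral_mono_set (intS hsi (dParent q))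
  · exact Filter.Eventually.of_forall fun x => inv_nonneg.2 (hw x).le
  · exact Filter.Eventually.of_forall (subset_parent q)

-- integral of constant one
lemma int_one (q : ℤ × ℤ) : ∫ (_ : ℝ) in dyad q, (1:ℝ) = dLen q := by
  simp [Measure.real, volume_dyad, ENNReal.toReal_ofReal (dLen_pos q).le]

include hw hwi hsi in
lemma CS1 (q : ℤ × ℤ) : dLen q ^ 2 ≤ Wf w q * Sf w q := by
  have h := cs_helper (μ := volume.restrict (dyad q))
    (f := fun x => Real.sqrt (w x)) (g := fun x => (Real.sqrt (w x))⁻¹) ?_ ?_ ?_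
  · have e1 : (∫ x in dyad q, Real.sqrt (w x) * Real.sqrt (w x)) = Wf w q := by
      apply setIntegral_congr_fun (measurableSet_dyad q)
      intro x _; exact Real.mul_self_sqrt (hw x).le
    have e2 : (∫ x in dyad q, (Real.sqrt (w x))⁻¹ * (Real.sqrt (w x))⁻¹) = Sf w q := by
      apply setIntegral_congr_fun (measurableSet_dyad q)
      intro x _
      show (Real.sqrt (w x))⁻¹ * (Real.sqrt (w x))⁻¹ = (w x)⁻¹
      rw [← mul_inv, Real.mul_self_sqrt (hw x).le]
    have e3 : (∫ x in dyad q, Real.sqrt (w x) * (Real.sqrt (w x))⁻¹) = dLen q := by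
      rw [← int_one q]
      apply setIntegral_congr_fun (measurableSet_dyad q)
      intro x _
      exact mul_inv_cancel₀ (Real.sqrt_pos.2 (hw x)).ne'
    rw [e1, e2, e3] at h; exact h
  · apply (intW hwi q).congr_fun (fun x _ => (Real.mul_self_sqrt (hw x).le).symm) (measurableSet_dyad q)
  · apply (intS hsi q).congr_fun ?_ (measurableSet_dyad q)
    intro x _
    show (w x)⁻¹ = (Real.sqrt (w x))⁻¹ * (Real.sqrt (w x))⁻¹
    rw [← mul_inv, Real.mul_self_sqrt (hw x).le]
  · have h1 : IntegrableOn (fun _ : ℝ => (1:ℝ)) (dyad q) volume :=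
      integrableOn_const (volume_dyad_fin q)
    apply IntegrableOn.congr_fun h1 ?_ (measurableSet_dyad q)
    intro x _
    exact (mul_inv_cancel₀ (Real.sqrt_pos.2 (hw x)).ne').symm

include hw hwi hsi in
lemma CS2 (q : ℤ × ℤ) : Rf w q ^ 2 ≤ dLen q * Sf w q := by
  have h := cs_helper (μ := volume.restrict (dyad q))
    (f := fun _ => (1:ℝ)) (g := fun x => (Real.sqrt (w x))⁻¹) ?_ ?_ ?_
  · have e1 : (∫ (_ : ℝ) in dyad q, (1:ℝ) * 1) = dLen q := by
      simpa using int_one q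
    have e2 : (∫ x in dyad q, (Real.sqrt (w x))⁻¹ * (Real.sqrt (w x))⁻¹) = Sf w q := by
      apply setIntegral_congr_fun (measurableSet_dyad q)
      intro x _
      show (Real.sqrt (w x))⁻¹ * (Real.sqrt (w x))⁻¹ = (w x)⁻¹
      rw [← mul_inv, Real.mul_self_sqrt (hw x).le]
    have e3 : (∫ x in dyad q, (1:ℝ) * (Real.sqrt (w x))⁻¹) = Rf w q := by
      simp [Rf]
    rw [e1, e2, e3] at h; exact h
  · have h1 : IntegrableOn (fun _ : ℝ => (1:ℝ)) (dyad q) volume :=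
      integrableOn_const (volume_dyad_fin q)
    simp only [one_mul]
    exact h1
  · apply (intS hsi q).congr_fun ?_ (measurableSet_dyad q)
    intro x _
    show (w x)⁻¹ = (Real.sqrt (w x))⁻¹ * (Real.sqrt (w x))⁻¹
    rw [← mul_inv, Real.mul_self_sqrt (hw x).le]
  · simpa [IntegrableOn] using intR hw hwi hsi q

include hw hwi hsi in
lemma hc_formula (q : ℤ × ℤ) :
    hc (fun x => (Real.sqrt (w x))⁻¹) q
      = (Real.sqrt (dLen q))⁻¹ * (Rf w (dLeft q) - Rf w (dRight q)) := by
  unfold hc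
  have key : (fun x => (Real.sqrt (w x))⁻¹ * haarF q x) = fun x =>
      (Real.sqrt (dLen q))⁻¹ *
        ((dyad (dLeft q)).indicator (fun y => (Real.sqrt (w y))⁻¹) x
          - (dyad (dRight q)).indicator (fun y => (Real.sqrt (w y))⁻¹) x) := by
    funext x
    unfold haarF
    by_cases hL : x ∈ dyad (dLeft q) <;> by_cases hR : x ∈ dyad (dRight q) <;>
      simp [Set.indicator_of_mem, Set.indicator_of_notMem, hL, hR] <;> ring
  rw [key, integral_const_mul, integral_sub, integral_indicator (measurableSet_dyad _),
      integral_indicator (measurableSet_dyad _)]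
  · rfl
  · exact (integrable_indicator_iff (measurableSet_dyad _)).2 (intR hw hwi hsi _)
  · exact (integrable_indicator_iff (measurableSet_dyad _)).2 (intR hw hwi hsi _)

include hw hwi hsi in
lemma hc_sq (q : ℤ × ℤ) :
    hc (fun x => (Real.sqrt (w x))⁻¹) q ^ 2
      = (dLen q)⁻¹ * (Rf w (dLeft q) - Rf w (dRight q)) ^ 2 := by
  rw [hc_formula hw hwi hsi q, mul_pow, ← Real.sqrt_inv, Real.sq_sqrt (inv_nonneg.2 (dLen_pos q).le)]

end W

def af (w : ℝ → ℝ) (q : ℤ × ℤ) : ℝ :=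
  (dLen q)⁻¹ * (Rf w (dLeft q) - Rf w (dRight q)) ^ 2

section W
variable {w : ℝ → ℝ} {A : ℝ}
variable (hWpos : ∀ q, 0 < Wf w q) (hSpos : ∀ q, 0 < Sf w q)
  (hWadd : ∀ q, Wf w q = Wf w (dLeft q) + Wf w (dRight q))
  (hSadd : ∀ q, Sf w q = Sf w (dLeft q) + Sf w (dRight q))
  (hRadd : ∀ q, Rf w q = Rf w (dLeft q) + Rf w (dRight q))
  (hCS2 : ∀ q, Rf w q ^ 2 ≤ dLen q * Sf w q)
  (hA2 : ∀ q, ((dLen q)⁻¹ * Wf w q) * ((dLen q)⁻¹ * Sf w q) ≤ A)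

lemma af_nonneg (q : ℤ × ℤ) : 0 ≤ af w q :=
  mul_nonneg (inv_nonneg.2 (dLen_pos q).le) (sq_nonneg _)

include hWpos in
lemma zf_pos (q : ℤ × ℤ) : 0 < zf w q :=
  mul_pos (inv_pos.2 (dLen_pos q)) (hWpos q)

include hWpos hSpos hA2 in
lemma hA_nonneg : 0 ≤ A := by
  have h := hA2 (0, 0)
  have hp : 0 < ((dLen (0,0))⁻¹ * Wf w (0,0)) * ((dLen (0,0))⁻¹ * Sf w (0,0)) :=
    mul_pos (mul_pos (inv_pos.2 (dLen_pos _)) (hWpos _)) (mul_pos (inv_pos.2 (dLen_pos _)) (hSpos _))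
  linarith

include hSadd hRadd hCS2 in
lemma key_ineq (q : ℤ × ℤ) : af w q ≤ Sf w q - Rf w q ^ 2 / dLen q := by
  have hl : 0 < dLen q := dLen_pos q
  have h1 := hCS2 (dLeft q)
  have h2 := hCS2 (dRight q)
  rw [dLen_left] at h1
  rw [dLen_right] at h2
  have hS := hSadd q
  have hR := hRadd q
  set RL := Rf w (dLeft q)
  set RR := Rf w (dRight q)
  have hsum : (RL - RR) ^ 2 + (RL + RR) ^ 2 ≤ dLen q * Sf w q := by nlinarith
  have hinv : dLen q * (dLen q)⁻¹ = 1 := mul_inv_cancel₀ hl.ne'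
  have hd : Rf w q ^ 2 / dLen q = (RL + RR) ^ 2 * (dLen q)⁻¹ := by
    rw [hR, div_eq_mul_inv]
  unfold af
  rw [hd]
  have hinvnn : 0 ≤ (dLen q)⁻¹ := inv_nonneg.2 hl.le
  nlinarith [mul_le_mul_of_nonneg_right hsum hinvnn]

include hSadd hRadd hCS2 in
lemma bessel : ∀ (N : ℕ) (K : ℤ × ℤ),
    (∑ J ∈ tree N K, af w J) ≤ Sf w K - Rf w K ^ 2 / dLen K := by
  intro N
  induction N with
  | zero =>
    intro K
    show ∑ J ∈ ({K} : Finset (ℤ × ℤ)), af w J ≤ _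
    rw [Finset.sum_singleton]
    exact key_ineq hSadd hRadd hCS2 K
  | succ N ih =>
    intro K
    rw [tree_sum_succ]
    have ihL := ih (dLeft K)
    have ihR := ih (dRight K)
    rw [dLen_left] at ihL
    rw [dLen_right] at ihR
    have hl : (0:ℝ) < dLen K := dLen_pos K
    have hdiv : ∀ x : ℝ, x / (dLen K / 2) = 2 * x / dLen K := by
      intro x; field_simp
    rw [hdiv] at ihL
    rw [hdiv] at ihR
    have hS := hSadd K
    have hR := hRadd K
    have hid : af w K = 2 * Rf w (dLeft K) ^ 2 / dLen K + 2 * Rf w (dRight K) ^ 2 / dLen K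
        - Rf w K ^ 2 / dLen K := by
      unfold af
      rw [hR]
      field_simp
      ring
    linarith

include hWpos hA2 in
lemma Sf_le (q : ℤ × ℤ) : Sf w q ≤ A * dLen q ^ 2 / Wf w q := by
  have hl : 0 < dLen q := dLen_pos q
  have hW := hWpos q
  rw [le_div_iff₀ hW]
  have h := mul_le_mul_of_nonneg_right (hA2 q) (sq_nonneg (dLen q))
  have e : ((dLen q)⁻¹ * Wf w q) * ((dLen q)⁻¹ * Sf w q) * dLen q ^ 2 = Wf w q * Sf w q := by
    have e0 : ((dLen q)⁻¹ * Wf w q) * ((dLen q)⁻¹ * Sf w q) * dLen q ^ 2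
        = Wf w q * Sf w q * ((dLen q)⁻¹ * dLen q) ^ 2 := by ring
    rw [e0, inv_mul_cancel₀ hl.ne']
    ring
  rw [e] at h
  nlinarith [h]

include hWpos hSpos hSadd hRadd hCS2 hA2 in
lemma alg4 (K : ℤ × ℤ) (G V : ℝ) (hVnn : 0 ≤ V)
    (hG : G ≤ 2 * zf w K * V + 2 * A * Wf w K * (zf w K)⁻¹)
    (hV : V ≤ A * dLen K ^ 2 / Wf w K) : G ≤ 4 * A * dLen K := by
  have hl : 0 < dLen K := dLen_pos K
  have hW := hWpos K
  have hz := zf_pos hWpos K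
  have e1 : 2 * zf w K * (A * dLen K ^ 2 / Wf w K) = 2 * A * dLen K := by
    unfold zf; field_simp
  have e2 : 2 * A * Wf w K * (zf w K)⁻¹ = 2 * A * dLen K := by
    unfold zf
    rw [mul_inv, inv_inv]
    field_simp
  have h3 : 2 * zf w K * V ≤ 2 * zf w K * (A * dLen K ^ 2 / Wf w K) :=
    mul_le_mul_of_nonneg_left hV (by positivity)
  rw [e2] at hG
  linarith

include hWpos hSpos hSadd hRadd hCS2 hA2 in
lemma Vbound (N : ℕ) (K : ℤ × ℤ) :
    (∑ J ∈ tree N K, af w J) ≤ A * dLen K ^ 2 / Wf w K := by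
  have h1 := bessel hSadd hRadd hCS2 N K
  have h2 := Sf_le hWpos hA2 K
  have h3 : 0 ≤ Rf w K ^ 2 / dLen K := div_nonneg (sq_nonneg _) (dLen_pos K).le
  linarith

include hWpos hSpos hA2 in
lemma step2_bound (K : ℤ × ℤ) {τ : ℝ} (hτ : 0 < τ) (hz : 2 * τ < zf w K) :
    4 * A * dLen K ≤ 2 * A * Wf w K * τ⁻¹ := by
  have hA0 : 0 ≤ A := hA_nonneg hWpos hSpos hA2
  have hl : 0 < dLen K := dLen_pos K
  have hWτ : 2 * τ * dLen K ≤ Wf w K := by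
    have h := mul_le_mul_of_nonneg_right hz.le hl.le
    have e : (dLen K)⁻¹ * Wf w K * dLen K = Wf w K := by field_simp
    unfold zf at h
    rw [e] at h
    linarith
  have hττ : τ * τ⁻¹ = 1 := mul_inv_cancel₀ hτ.ne'
  have h5 : 0 ≤ 2 * A * τ⁻¹ * (Wf w K - 2 * τ * dLen K) :=
    mul_nonneg (mul_nonneg (by linarith) (inv_nonneg.2 hτ.le)) (sub_nonneg.2 hWτ)
  have expand : 2 * A * Wf w K * τ⁻¹ - 4 * A * dLen K
      = 2 * A * τ⁻¹ * (Wf w K - 2 * τ * dLen K) + 4 * A * dLen K * (τ * τ⁻¹) - 4 * A * dLen K := by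
    ring
  rw [hττ] at expand
  linarith

include hWpos hSpos hWadd hSadd hRadd hCS2 hA2 in
lemma G_main : ∀ (N : ℕ) (K : ℤ × ℤ) (τ : ℝ), 0 < τ →
    (∑ J ∈ tree N K, af w J * zf w J)
      ≤ 2 * τ * (∑ J ∈ tree N K, af w J) + 2 * A * Wf w K * τ⁻¹ := by
  intro N
  have hA0 : 0 ≤ A := hA_nonneg hWpos hSpos hA2
  induction N with
  | zero =>
    intro K τ hτ
    show ∑ J ∈ ({K} : Finset (ℤ × ℤ)), af w J * zf w J ≤
      2 * τ * ∑ J ∈ ({K} : Finset (ℤ × ℤ)), af w J + 2 * A * Wf w K * τ⁻¹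
    rw [Finset.sum_singleton, Finset.sum_singleton]
    by_cases hz : zf w K ≤ 2 * τ
    · have h1 : af w K * zf w K ≤ af w K * (2 * τ) :=
        mul_le_mul_of_nonneg_left hz (af_nonneg K)
      have h2 : 0 ≤ 2 * A * Wf w K * τ⁻¹ := by
        have := (hWpos K).le
        have := (inv_pos.2 hτ).le
        positivity
      linarith
    · push_neg at hz
      have h1 : af w K * zf w K ≤ 4 * A * dLen K := by
        apply alg4 hWpos hSpos hSadd hRadd hCS2 hA2 K _ (af w K) (af_nonneg K)
        · have hzK := zf_pos hWpos K
          have hWne : Wf w K ≠ 0 := (hWpos K).ne'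
          have e2 : 2 * A * Wf w K * (zf w K)⁻¹ = 2 * A * dLen K := by
            unfold zf; rw [mul_inv, inv_inv]; field_simp
          have h3 : af w K * zf w K ≤ 2 * zf w K * af w K := by
            nlinarith [af_nonneg (w := w) K, hzK]
          have h4 : 0 ≤ 2 * A * Wf w K * (zf w K)⁻¹ := by
            rw [e2]; have := (dLen_pos K).le; positivity
          linarith
        · have h := Vbound hWpos hSpos hSadd hRadd hCS2 hA2 0 K
          show af w K ≤ _
          have e : (∑ J ∈ tree 0 K, af w J) = af w K := Finset.sum_singleton _ _
          rw [e] at h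
          exact h
      have h2 := step2_bound hWpos hSpos hA2 K hτ hz
      have h3 : 0 ≤ 2 * τ * af w K := by
        have := af_nonneg (w := w) K
        positivity
      linarith
  | succ N ih =>
    intro K τ hτ
    have hstep : ∀ τ' : ℝ, 0 < τ' → zf w K ≤ 2 * τ' →
        (∑ J ∈ tree (N+1) K, af w J * zf w J)
          ≤ 2 * τ' * (∑ J ∈ tree (N+1) K, af w J) + 2 * A * Wf w K * τ'⁻¹ := by
      intro τ' hτ' hz
      rw [tree_sum_succ (fun J => af w J * zf w J) N K, tree_sum_succ (fun J => af w J) N K]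
      have hL := ih (dLeft K) τ' hτ'
      have hR := ih (dRight K) τ' hτ'
      have h1 : af w K * zf w K ≤ af w K * (2 * τ') :=
        mul_le_mul_of_nonneg_left hz (af_nonneg K)
      have hWa := hWadd K
      rw [hWa]
      ring_nf
      ring_nf at hL hR h1
      linarith
    by_cases hz : zf w K ≤ 2 * τ
    · exact hstep τ hτ hz
    · push_neg at hz
      have hzK := zf_pos hWpos K
      have h1 := hstep (zf w K) hzK (by linarith)
      have h4 : (∑ J ∈ tree (N+1) K, af w J * zf w J) ≤ 4 * A * dLen K := by
        apply alg4 hWpos hSpos hSadd hRadd hCS2 hA2 K _ _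
          (Finset.sum_nonneg fun J _ => af_nonneg J)
        · exact h1
        · exact Vbound hWpos hSpos hSadd hRadd hCS2 hA2 (N+1) K
      have h2 := step2_bound hWpos hSpos hA2 K hτ hz
      have h3 : 0 ≤ 2 * τ * (∑ J ∈ tree (N+1) K, af w J) := by
        have := Finset.sum_nonneg (fun J (_ : J ∈ tree (N+1) K) => af_nonneg (w := w) J)
        positivity
      linarith

include hWpos hSpos hWadd hSadd hRadd hCS2 hA2 in
lemma G4 (N : ℕ) (K : ℤ × ℤ) :
    (∑ J ∈ tree N K, af w J * zf w J) ≤ 4 * A * dLen K := by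
  have hzK := zf_pos hWpos K
  have h1 := G_main hWpos hSpos hWadd hSadd hRadd hCS2 hA2 N K (zf w K) hzK
  apply alg4 hWpos hSpos hSadd hRadd hCS2 hA2 K _ _
    (Finset.sum_nonneg fun J _ => af_nonneg J)
  · exact h1
  · exact Vbound hWpos hSpos hSadd hRadd hCS2 hA2 N K

end W


section Final
variable {w : ℝ → ℝ} {A : ℝ} (hw : ∀ x, 0 < w x)
  (hwi : LocallyIntegrable w volume)
  (hsi : LocallyIntegrable (fun x => (w x)⁻¹) volume)
  (hA2 : ∀ q, ((dLen q)⁻¹ * Wf w q) * ((dLen q)⁻¹ * Sf w q) ≤ A)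

include hw hwi hsi hA2 in
lemma zparent (q : ℤ × ℤ) : zf w (dParent q) ≤ 2 * A * zf w q := by
  have hA0 : 0 ≤ A := hA_nonneg (fun r => Wf_pos hw hwi r) (fun r => Sf_pos hw hsi r) hA2
  have hl : 0 < dLen q := dLen_pos q
  have hWq : 0 < Wf w q := Wf_pos hw hwi q
  have hSq : 0 < Sf w q := Sf_pos hw hsi q
  have hWp : 0 < Wf w (dParent q) := Wf_pos hw hwi (dParent q)
  have hSp : 0 < Sf w (dParent q) := Sf_pos hw hsi (dParent q)
  have hmono : Sf w q ≤ Sf w (dParent q) := Sf_mono_parent hw hsi q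
  have hCS : dLen q ^ 2 ≤ Wf w q * Sf w q := CS1 hw hwi hsi q
  have h1 := hA2 (dParent q)
  rw [dLen_parent q] at h1
  have h2ℓ : (2 * dLen q) ≠ 0 := by positivity
  have hWπS : Wf w (dParent q) * Sf w (dParent q) ≤ 4 * A * dLen q ^ 2 := by
    have h := mul_le_mul_of_nonneg_right h1 (sq_nonneg (2 * dLen q))
    have e0 : ((2 * dLen q)⁻¹ * Wf w (dParent q)) * ((2 * dLen q)⁻¹ * Sf w (dParent q))
        * (2 * dLen q) ^ 2
        = Wf w (dParent q) * Sf w (dParent q) * ((2 * dLen q)⁻¹ * (2 * dLen q)) ^ 2 := by ring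
    rw [e0, inv_mul_cancel₀ h2ℓ] at h
    nlinarith [h]
  have h4 : Wf w (dParent q) ≤ 4 * A * Wf w q := by
    have c1 : Wf w (dParent q) * Sf w q ≤ Wf w (dParent q) * Sf w (dParent q) :=
      mul_le_mul_of_nonneg_left hmono hWp.le
    have c3 : 4 * A * dLen q ^ 2 ≤ 4 * A * (Wf w q * Sf w q) := by nlinarith
    have c4 : Wf w (dParent q) * Sf w q ≤ (4 * A * Wf w q) * Sf w q := by nlinarith
    exact le_of_mul_le_mul_right c4 hSq
  unfold zf
  rw [dLen_parent q]
  have h5 : (2 * dLen q)⁻¹ * Wf w (dParent q) ≤ (2 * dLen q)⁻¹ * (4 * A * Wf w q) :=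
    mul_le_mul_of_nonneg_left h4 (inv_nonneg.2 (by positivity))
  have e1 : (2 * dLen q)⁻¹ * (4 * A * Wf w q) = 2 * A * ((dLen q)⁻¹ * Wf w q) := by
    rw [mul_inv]
    have : (2:ℝ)⁻¹ * 2 = 1 := by norm_num
    field_simp
    ring
  rw [e1] at h5
  exact h5

end Final

/-- `Σ_{J⊆I} ⟨w^{-1/2},h_J⟩² ⟨w⟩_{πJ} ≲ [w]²_{A₂} |I|`. -/
theorem statement7 :
    ∃ C : ℝ, 0 < C ∧ ∀ (w : ℝ → ℝ), (∀ x, 0 < w x) →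
      LocallyIntegrable w volume → LocallyIntegrable (fun x => (w x)⁻¹) volume →
      ∀ A : ℝ, (∀ p : ℤ × ℤ, avg w p * avg (fun x => (w x)⁻¹) p ≤ A) →
      ∀ p : ℤ × ℤ, ∀ F : Finset (ℤ × ℤ), (∀ q ∈ F, dyad q ⊆ dyad p) →
        ∑ q ∈ F, (hc (fun x => (Real.sqrt (w x))⁻¹) q) ^ 2 * avg w (dParent q) ≤
          C * A ^ 2 * dLen p := by
  refine ⟨8, by norm_num, ?_⟩
  intro w hw hwi hsi A hA p F hF
  -- abstract hypotheses
  have hWpos : ∀ q, 0 < Wf w q := fun q => Wf_pos hw hwi q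
  have hSpos : ∀ q, 0 < Sf w q := fun q => Sf_pos hw hsi q
  have hWadd : ∀ q, Wf w q = Wf w (dLeft q) + Wf w (dRight q) := fun q => Wf_add hwi q
  have hSadd : ∀ q, Sf w q = Sf w (dLeft q) + Sf w (dRight q) := fun q => Sf_add hsi q
  have hRadd : ∀ q, Rf w q = Rf w (dLeft q) + Rf w (dRight q) := fun q => Rf_add hw hwi hsi q
  have hCS2 : ∀ q, Rf w q ^ 2 ≤ dLen q * Sf w q := fun q => CS2 hw hwi hsi q
  have hA2 : ∀ q, ((dLen q)⁻¹ * Wf w q) * ((dLen q)⁻¹ * Sf w q) ≤ A := fun q => hA q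
  have hA0 : 0 ≤ A := hA_nonneg hWpos hSpos hA2
  set N := F.sup (fun r => (p.1 - r.1).toNat) with hN
  have hsub : F ⊆ tree N p := fun q hq => mem_tree_sup hF hq
  have step1 : ∑ q ∈ F, (hc (fun x => (Real.sqrt (w x))⁻¹) q) ^ 2 * avg w (dParent q)
      = ∑ q ∈ F, af w q * zf w (dParent q) := by
    refine Finset.sum_congr rfl fun q _ => ?_
    rw [hc_sq hw hwi hsi q]
    rfl
  have step2 : ∑ q ∈ F, af w q * zf w (dParent q)
      ≤ ∑ q ∈ F, 2 * A * (af w q * zf w q) := by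
    refine Finset.sum_le_sum fun q _ => ?_
    have h := zparent hw hwi hsi hA2 q
    calc af w q * zf w (dParent q) ≤ af w q * (2 * A * zf w q) :=
          mul_le_mul_of_nonneg_left h (af_nonneg q)
      _ = 2 * A * (af w q * zf w q) := by ring
  have step3 : ∑ q ∈ F, 2 * A * (af w q * zf w q)
      ≤ ∑ q ∈ tree N p, 2 * A * (af w q * zf w q) := by
    refine Finset.sum_le_sum_of_subset_of_nonneg hsub fun q _ _ => ?_
    have h1 := af_nonneg (w := w) q
    have h2 := (zf_pos hWpos q).le
    positivity
  have step4 : ∑ q ∈ tree N p, 2 * A * (af w q * zf w q)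
      = 2 * A * ∑ q ∈ tree N p, af w q * zf w q := by
    rw [Finset.mul_sum]
  have step5 : 2 * A * ∑ q ∈ tree N p, af w q * zf w q ≤ 2 * A * (4 * A * dLen p) := by
    refine mul_le_mul_of_nonneg_left ?_ (by linarith)
    exact G4 hWpos hSpos hWadd hSadd hRadd hCS2 hA2 N p
  calc ∑ q ∈ F, (hc (fun x => (Real.sqrt (w x))⁻¹) q) ^ 2 * avg w (dParent q)
      = ∑ q ∈ F, af w q * zf w (dParent q) := step1
    _ ≤ ∑ q ∈ F, 2 * A * (af w q * zf w q) := step2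
    _ ≤ ∑ q ∈ tree N p, 2 * A * (af w q * zf w q) := step3
    _ = 2 * A * ∑ q ∈ tree N p, af w q * zf w q := step4
    _ ≤ 2 * A * (4 * A * dLen p) := step5
    _ = 8 * A ^ 2 * dLen p := by ring
end
end
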